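/- arXiv:2506.13633 — 6 statements merged into one kernel-verified Lean document; each statement's English description precedes it below -/
import Mathlib

section
/- There exists a constant L_B, depending only on T, R_D, the bounds and Lipschitz constants of σ and σ', and the moments of μ₀, such that |B₀(t¹,x¹,t',x') − B₀(t²,x²,t',x')| ≤ L_B (|t¹−t²| + ‖x¹−x²‖) for all t¹,t²,t' ∈ [0,T] and all x¹,x²,x' ∈ D. -/
open MeasureTheory Set

noncomputable section

/-- The neural-network (neural tangent) kernel integrand
`k(t,x,t',x'; c,wᵗ,w,η)` from the paper, with parameter tuple
`p = (c, wᵗ, w, η) ∈ ℝ × ℝ × ℝ^d × ℝ`. -/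
def nnk (d : ℕ) (σ σ' : ℝ → ℝ)
    (t : ℝ) (x : EuclideanSpace ℝ (Fin d)) (t' : ℝ) (x' : EuclideanSpace ℝ (Fin d))
    (p : ℝ × ℝ × EuclideanSpace ℝ (Fin d) × ℝ) : ℝ :=
  σ (p.2.1 * t + (inner ℝ p.2.2.1 x : ℝ) + p.2.2.2) *
      σ (p.2.1 * t' + (inner ℝ p.2.2.1 x' : ℝ) + p.2.2.2)
    + p.1 ^ 2 * σ' (p.2.1 * t + (inner ℝ p.2.2.1 x : ℝ) + p.2.2.2) *
        σ' (p.2.1 * t' + (inner ℝ p.2.2.1 x' : ℝ) + p.2.2.2) *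
        (t * t' + (inner ℝ x x' : ℝ) + 1)

/-- The neural-network kernel `B₀(t,x,t',x') = ∫ k(t,x,t',x'; ·) dμ₀`. -/
def nnB (d : ℕ) (σ σ' : ℝ → ℝ)
    (μ₀ : Measure (ℝ × ℝ × EuclideanSpace ℝ (Fin d) × ℝ))
    (t : ℝ) (x : EuclideanSpace ℝ (Fin d)) (t' : ℝ) (x' : EuclideanSpace ℝ (Fin d)) : ℝ :=
  ∫ p, nnk d σ σ' t x t' x' p ∂μ₀

lemma nnk_continuous (d : ℕ) (σ σ' : ℝ → ℝ) (hσ : Continuous σ) (hσ' : Continuous σ')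
    (t t' : ℝ) (x x' : EuclideanSpace ℝ (Fin d)) :
    Continuous (nnk d σ σ' t x t' x') := by
  have h1 : Continuous (fun p : ℝ × ℝ × EuclideanSpace ℝ (Fin d) × ℝ =>
      p.2.1 * t + (inner ℝ p.2.2.1 x : ℝ) + p.2.2.2) :=
    (((continuous_fst.comp continuous_snd).mul continuous_const).add
      (Continuous.inner (continuous_fst.comp (continuous_snd.comp continuous_snd)) continuous_const)).add
      (continuous_snd.comp (continuous_snd.comp continuous_snd))
  have h2 : Continuous (fun p : ℝ × ℝ × EuclideanSpace ℝ (Fin d) × ℝ =>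
      p.2.1 * t' + (inner ℝ p.2.2.1 x' : ℝ) + p.2.2.2) :=
    (((continuous_fst.comp continuous_snd).mul continuous_const).add
      (Continuous.inner (continuous_fst.comp (continuous_snd.comp continuous_snd)) continuous_const)).add
      (continuous_snd.comp (continuous_snd.comp continuous_snd))
  exact ((hσ.comp h1).mul (hσ.comp h2)).add
    ((((continuous_fst.pow 2).mul (hσ'.comp h1)).mul (hσ'.comp h2)).mul continuous_const)

set_option maxHeartbeats 2000000 in
/-- Lipschitz continuity of the kernel `B₀` in the time-space
variables: there is a constant `L_B` with
`|B₀(t¹,x¹,t',x') − B₀(t²,x²,t',x')| ≤ L_B (|t¹−t²| + ‖x¹−x²‖)`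
for all `t¹,t²,t' ∈ [0,T]` and `x¹,x²,x' ∈ D`. -/
theorem nnB_lipschitz
    (d : ℕ) (hd : 1 ≤ d) (T : ℝ) (hT : 0 < T)
    (D : Set (EuclideanSpace ℝ (Fin d))) (hD_ne : D.Nonempty) (hD_open : IsOpen D)
    (R_D : ℝ) (hD_sub : D ⊆ Metric.closedBall 0 R_D) (hD_vol : volume D < ⊤)
    (σ σ' : ℝ → ℝ) (C_σ L_σ C_σ' L_σ' : ℝ)
    (hσ_bdd : ∀ y : ℝ, |σ y| ≤ C_σ) (hσ_lip : LipschitzWith (Real.toNNReal L_σ) σ)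
    (hσ_deriv : ∀ y : ℝ, HasDerivAt σ (σ' y) y)
    (hσ'_bdd : ∀ y : ℝ, |σ' y| ≤ C_σ') (hσ'_lip : LipschitzWith (Real.toNNReal L_σ') σ')
    (μ₀ : Measure (ℝ × ℝ × EuclideanSpace ℝ (Fin d) × ℝ)) [IsProbabilityMeasure μ₀]
    (hc_supp : ∃ R : ℝ, μ₀ {p | R < |p.1|} = 0)
    (hmoment : Integrable
      (fun p : ℝ × ℝ × EuclideanSpace ℝ (Fin d) × ℝ =>
        |p.2.1| ^ 2 + ‖p.2.2.1‖ ^ 2 + |p.2.2.2| ^ 2) μ₀) :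
    ∃ L_B : ℝ, ∀ t₁ ∈ Icc (0:ℝ) T, ∀ t₂ ∈ Icc (0:ℝ) T, ∀ t' ∈ Icc (0:ℝ) T,
      ∀ x₁ ∈ D, ∀ x₂ ∈ D, ∀ x' ∈ D,
        |nnB d σ σ' μ₀ t₁ x₁ t' x' - nnB d σ σ' μ₀ t₂ x₂ t' x'| ≤
          L_B * (|t₁ - t₂| + ‖x₁ - x₂‖) := by
  classical
  obtain ⟨R₀, hR₀⟩ := hc_supp
  set R : ℝ := max R₀ 0 with hRdef
  have hRnn : 0 ≤ R := le_max_right _ _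
  have hae : ∀ᵐ p ∂μ₀, |p.1| ≤ R := by
    rw [ae_iff]
    refine measure_mono_null (fun p hp => ?_) hR₀
    simp only [mem_setOf_eq, not_le] at hp ⊢
    exact lt_of_le_of_lt (le_max_left _ _) hp
  have hCσ : 0 ≤ C_σ := le_trans (abs_nonneg _) (hσ_bdd 0)
  have hCσ' : 0 ≤ C_σ' := le_trans (abs_nonneg _) (hσ'_bdd 0)
  set Lσ : ℝ := (Real.toNNReal L_σ : ℝ) with hLσdef
  set Lσ' : ℝ := (Real.toNNReal L_σ' : ℝ) with hLσ'def
  have hLσ : 0 ≤ Lσ := (Real.toNNReal L_σ).coe_nonneg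
  have hLσ' : 0 ≤ Lσ' := (Real.toNNReal L_σ').coe_nonneg
  have hσL : ∀ u v : ℝ, |σ u - σ v| ≤ Lσ * |u - v| := fun u v => by
    have h := hσ_lip.dist_le_mul u v; rw [Real.dist_eq, Real.dist_eq] at h; exact h
  have hσ'L : ∀ u v : ℝ, |σ' u - σ' v| ≤ Lσ' * |u - v| := fun u v => by
    have h := hσ'_lip.dist_le_mul u v; rw [Real.dist_eq, Real.dist_eq] at h; exact h
  have hRD : 0 ≤ R_D := by
    obtain ⟨x, hx⟩ := hD_ne
    have := hD_sub hx
    simp only [Metric.mem_closedBall] at this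
    exact le_trans dist_nonneg this
  set M : ℝ := T ^ 2 + R_D ^ 2 + 1 with hMdef
  have hM : 0 ≤ M := by positivity
  set K : ℝ := max T R_D with hKdef
  have hK : 0 ≤ K := le_trans hRD (le_max_right _ _)
  set A : ℝ := C_σ * Lσ + R ^ 2 * C_σ' * Lσ' * M with hAdef
  set B : ℝ := R ^ 2 * C_σ' * C_σ' * K with hBdef
  have hA : 0 ≤ A := by positivity
  have hB : 0 ≤ B := by positivity
  set F : (ℝ × ℝ × EuclideanSpace ℝ (Fin d) × ℝ) → ℝ :=
    fun p => A * (|p.2.1| + ‖p.2.2.1‖) + B with hFdef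
  have hnorm : ∀ x ∈ D, ‖x‖ ≤ R_D := by
    intro x hx
    have := hD_sub hx
    simpa [Metric.mem_closedBall, dist_zero_right] using this
  -- Integrability of nnk
  have hintk : ∀ t ∈ Icc (0:ℝ) T, ∀ t' ∈ Icc (0:ℝ) T, ∀ x ∈ D, ∀ x' ∈ D,
      Integrable (nnk d σ σ' t x t' x') μ₀ := by
    intro t ht t' ht' x hx x' hx'
    refine Integrable.mono' (integrable_const (C_σ * C_σ + R ^ 2 * C_σ' * C_σ' * M))
      ((nnk_continuous d σ σ' hσ_lip.continuous hσ'_lip.continuous t t' x x').aestronglyMeasurable)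
      (hae.mono fun p hp => ?_)
    have hc2 : p.1 ^ 2 ≤ R ^ 2 := by
      have := abs_nonneg p.1
      nlinarith [sq_abs p.1]
    have hP : |t * t' + (inner ℝ x x' : ℝ) + 1| ≤ M := by
      have h1 : |(inner ℝ x x' : ℝ)| ≤ ‖x‖ * ‖x'‖ := abs_real_inner_le_norm x x'
      have h2 : ‖x‖ ≤ R_D := hnorm x hx
      have h3 : ‖x'‖ ≤ R_D := hnorm x' hx'
      have h4a := abs_add_le (t * t' + (inner ℝ x x' : ℝ)) 1
      have h4b := abs_add_le (t * t') ((inner ℝ x x' : ℝ))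
      have h4c : |(1:ℝ)| = 1 := abs_one
      have h5 : |t * t'| ≤ T ^ 2 := by
        rw [abs_mul, abs_of_nonneg ht.1, abs_of_nonneg ht'.1]
        nlinarith [ht.1, ht.2, ht'.1, ht'.2]
      have h6 : ‖x‖ * ‖x'‖ ≤ R_D ^ 2 := by nlinarith [norm_nonneg x, norm_nonneg x']
      have hMe : M = T ^ 2 + R_D ^ 2 + 1 := hMdef
      linarith
    simp only [Real.norm_eq_abs, nnk]
    set a := p.2.1 * t + (inner ℝ p.2.2.1 x : ℝ) + p.2.2.2
    set b := p.2.1 * t' + (inner ℝ p.2.2.1 x' : ℝ) + p.2.2.2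
    calc |σ a * σ b + p.1 ^ 2 * σ' a * σ' b * (t * t' + (inner ℝ x x' : ℝ) + 1)|
        ≤ |σ a * σ b| + |p.1 ^ 2 * σ' a * σ' b * (t * t' + (inner ℝ x x' : ℝ) + 1)| := abs_add_le _ _
      _ = |σ a| * |σ b| + p.1 ^ 2 * |σ' a| * |σ' b| * |t * t' + (inner ℝ x x' : ℝ) + 1| := by
          rw [abs_mul, abs_mul, abs_mul, abs_mul, abs_of_nonneg (sq_nonneg p.1)]
      _ ≤ C_σ * C_σ + R ^ 2 * C_σ' * C_σ' * M := by
          have term1 : |σ a| * |σ b| ≤ C_σ * C_σ :=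
            mul_le_mul (hσ_bdd a) (hσ_bdd b) (abs_nonneg _) hCσ
          have m1 : p.1 ^ 2 * |σ' a| ≤ R ^ 2 * C_σ' :=
            mul_le_mul hc2 (hσ'_bdd a) (abs_nonneg _) (sq_nonneg R)
          have m2 : p.1 ^ 2 * |σ' a| * |σ' b| ≤ R ^ 2 * C_σ' * C_σ' :=
            mul_le_mul m1 (hσ'_bdd b) (abs_nonneg _) (mul_nonneg (sq_nonneg R) hCσ')
          have m3 : p.1 ^ 2 * |σ' a| * |σ' b| * |t * t' + (inner ℝ x x' : ℝ) + 1|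
              ≤ R ^ 2 * C_σ' * C_σ' * M :=
            mul_le_mul m2 hP (abs_nonneg _) (mul_nonneg (mul_nonneg (sq_nonneg R) hCσ') hCσ')
          linarith
  -- pointwise Lipschitz bound
  have hkey : ∀ t₁ ∈ Icc (0:ℝ) T, ∀ t₂ ∈ Icc (0:ℝ) T, ∀ t' ∈ Icc (0:ℝ) T,
      ∀ x₁ ∈ D, ∀ x₂ ∈ D, ∀ x' ∈ D, ∀ p : ℝ × ℝ × EuclideanSpace ℝ (Fin d) × ℝ, |p.1| ≤ R →
      |nnk d σ σ' t₁ x₁ t' x' p - nnk d σ σ' t₂ x₂ t' x' p| ≤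
        F p * (|t₁ - t₂| + ‖x₁ - x₂‖) := by
    intro t₁ ht₁ t₂ ht₂ t' ht' x₁ hx₁ x₂ hx₂ x' hx' p hp
    obtain ⟨c, w, v, η⟩ := p
    simp only at hp
    set a₁ := w * t₁ + (inner ℝ v x₁ : ℝ) + η with ha₁
    set a₂ := w * t₂ + (inner ℝ v x₂ : ℝ) + η with ha₂
    set b := w * t' + (inner ℝ v x' : ℝ) + η with hb
    set P₁ := t₁ * t' + (inner ℝ x₁ x' : ℝ) + 1 with hP₁
    set P₂ := t₂ * t' + (inner ℝ x₂ x' : ℝ) + 1 with hP₂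
    set Δ := |t₁ - t₂| + ‖x₁ - x₂‖ with hΔdef
    have hΔnn : 0 ≤ Δ := by positivity
    set W : ℝ := |w| + ‖v‖ with hW
    have hWnn : 0 ≤ W := by positivity
    have hc2 : c ^ 2 ≤ R ^ 2 := by nlinarith [sq_abs c, abs_nonneg c]
    have hrw : nnk d σ σ' t₁ x₁ t' x' (c, w, v, η) - nnk d σ σ' t₂ x₂ t' x' (c, w, v, η)
        = (σ a₁ - σ a₂) * σ b
          + c ^ 2 * ((σ' a₁ - σ' a₂) * σ' b * P₁ + σ' a₂ * σ' b * (P₁ - P₂)) := by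
      simp only [nnk, ha₁, ha₂, hb, hP₁, hP₂]; ring
    have hS : |a₁ - a₂| ≤ |w| * |t₁ - t₂| + ‖v‖ * ‖x₁ - x₂‖ := by
      have : a₁ - a₂ = w * (t₁ - t₂) + (inner ℝ v (x₁ - x₂) : ℝ) := by
        simp only [ha₁, ha₂, inner_sub_right]; ring
      rw [this]
      calc |w * (t₁ - t₂) + (inner ℝ v (x₁ - x₂) : ℝ)|
          ≤ |w * (t₁ - t₂)| + |(inner ℝ v (x₁ - x₂) : ℝ)| := abs_add_le _ _
        _ ≤ |w| * |t₁ - t₂| + ‖v‖ * ‖x₁ - x₂‖ := by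
            rw [abs_mul]
            exact add_le_add le_rfl (abs_real_inner_le_norm v (x₁ - x₂))
    have hSW : |w| * |t₁ - t₂| + ‖v‖ * ‖x₁ - x₂‖ ≤ W * Δ := by
      simp only [hW, hΔdef]
      nlinarith [abs_nonneg w, norm_nonneg v, abs_nonneg (t₁ - t₂), norm_nonneg (x₁ - x₂)]
    have hS' : |a₁ - a₂| ≤ W * Δ := le_trans hS hSW
    have hP1 : |P₁| ≤ M := by
      have h1 : |(inner ℝ x₁ x' : ℝ)| ≤ ‖x₁‖ * ‖x'‖ := abs_real_inner_le_norm x₁ x'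
      have h2 : ‖x₁‖ ≤ R_D := hnorm x₁ hx₁
      have h3 : ‖x'‖ ≤ R_D := hnorm x' hx'
      have h4a : |P₁| ≤ |t₁ * t' + (inner ℝ x₁ x' : ℝ)| + |(1:ℝ)| := abs_add_le _ _
      have h4b := abs_add_le (t₁ * t') ((inner ℝ x₁ x' : ℝ))
      have h4c : |(1:ℝ)| = 1 := abs_one
      have h5 : |t₁ * t'| ≤ T ^ 2 := by
        rw [abs_mul, abs_of_nonneg ht₁.1, abs_of_nonneg ht'.1]
        nlinarith [ht₁.1, ht₁.2, ht'.1, ht'.2]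
      have h6 : ‖x₁‖ * ‖x'‖ ≤ R_D ^ 2 := by nlinarith [norm_nonneg x₁, norm_nonneg x']
      have hMe : M = T ^ 2 + R_D ^ 2 + 1 := hMdef
      linarith
    have hΔP : |P₁ - P₂| ≤ K * Δ := by
      have heq : P₁ - P₂ = (t₁ - t₂) * t' + (inner ℝ (x₁ - x₂) x' : ℝ) := by
        simp only [hP₁, hP₂, inner_sub_left]; ring
      rw [heq]
      have h1 : |(t₁ - t₂) * t' + (inner ℝ (x₁ - x₂) x' : ℝ)|
          ≤ |t₁ - t₂| * |t'| + ‖x₁ - x₂‖ * ‖x'‖ := by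
        calc |(t₁ - t₂) * t' + (inner ℝ (x₁ - x₂) x' : ℝ)|
            ≤ |(t₁ - t₂) * t'| + |(inner ℝ (x₁ - x₂) x' : ℝ)| := abs_add_le _ _
          _ ≤ |t₁ - t₂| * |t'| + ‖x₁ - x₂‖ * ‖x'‖ := by
              rw [abs_mul]
              exact add_le_add le_rfl (abs_real_inner_le_norm _ _)
      have h2 : |t'| ≤ K := by
        rw [abs_of_nonneg ht'.1]; exact le_trans ht'.2 (le_max_left _ _)
      have h3 : ‖x'‖ ≤ K := le_trans (hnorm x' hx') (le_max_right _ _)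
      have h4 : |t₁ - t₂| * |t'| + ‖x₁ - x₂‖ * ‖x'‖ ≤ K * Δ := by
        simp only [hΔdef]
        nlinarith [abs_nonneg (t₁ - t₂), norm_nonneg (x₁ - x₂)]
      linarith
    rw [hrw]
    have e1 : |(σ a₁ - σ a₂) * σ b| ≤ Lσ * (W * Δ) * C_σ := by
      rw [abs_mul]
      calc |σ a₁ - σ a₂| * |σ b| ≤ (Lσ * |a₁ - a₂|) * C_σ :=
          mul_le_mul (hσL _ _) (hσ_bdd b) (abs_nonneg _) (by positivity)
        _ ≤ Lσ * (W * Δ) * C_σ := by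
          apply mul_le_mul_of_nonneg_right _ hCσ
          exact mul_le_mul_of_nonneg_left hS' hLσ
    have e2 : |(σ' a₁ - σ' a₂) * σ' b * P₁| ≤ Lσ' * (W * Δ) * C_σ' * M := by
      rw [abs_mul, abs_mul]
      calc |σ' a₁ - σ' a₂| * |σ' b| * |P₁|
          ≤ (Lσ' * (W * Δ)) * C_σ' * M := by
            apply mul_le_mul _ hP1 (abs_nonneg _) (by positivity)
            apply mul_le_mul _ (hσ'_bdd b) (abs_nonneg _) (by positivity)
            exact le_trans (hσ'L _ _) (mul_le_mul_of_nonneg_left hS' hLσ')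
        _ = Lσ' * (W * Δ) * C_σ' * M := by ring
    have e3 : |σ' a₂ * σ' b * (P₁ - P₂)| ≤ C_σ' * C_σ' * (K * Δ) := by
      rw [abs_mul, abs_mul]
      apply mul_le_mul _ hΔP (abs_nonneg _) (by positivity)
      exact mul_le_mul (hσ'_bdd _) (hσ'_bdd _) (abs_nonneg _) hCσ'
    have hc2nn : (0:ℝ) ≤ c ^ 2 := sq_nonneg c
    calc |(σ a₁ - σ a₂) * σ b + c ^ 2 * ((σ' a₁ - σ' a₂) * σ' b * P₁ + σ' a₂ * σ' b * (P₁ - P₂))|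
        ≤ |(σ a₁ - σ a₂) * σ b| + c ^ 2 * (|(σ' a₁ - σ' a₂) * σ' b * P₁| + |σ' a₂ * σ' b * (P₁ - P₂)|) := by
          refine le_trans (abs_add_le _ _) (add_le_add le_rfl ?_)
          rw [abs_mul, abs_of_nonneg hc2nn]
          exact mul_le_mul_of_nonneg_left (abs_add_le _ _) hc2nn
      _ ≤ Lσ * (W * Δ) * C_σ + R ^ 2 * (Lσ' * (W * Δ) * C_σ' * M + C_σ' * C_σ' * (K * Δ)) := by
          have h1 : c ^ 2 * (|(σ' a₁ - σ' a₂) * σ' b * P₁| + |σ' a₂ * σ' b * (P₁ - P₂)|)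
              ≤ R ^ 2 * (Lσ' * (W * Δ) * C_σ' * M + C_σ' * C_σ' * (K * Δ)) := by
            apply mul_le_mul hc2 (add_le_add e2 e3) (by positivity) (by positivity)
          linarith [e1]
      _ = F (c, w, v, η) * Δ := by
          simp only [hFdef, hAdef, hBdef, hW]
          ring
  -- integrability of F
  have hF_int : Integrable F μ₀ := by
    have hFm : AEStronglyMeasurable F μ₀ := by
      apply Continuous.aestronglyMeasurable
      apply Continuous.add _ continuous_const
      apply Continuous.mul continuous_const
      exact ((continuous_fst.comp continuous_snd).abs).add
        ((continuous_fst.comp (continuous_snd.comp continuous_snd)).norm)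
    refine Integrable.mono'
      ((((integrable_const (2:ℝ)).add hmoment).const_mul A).add (integrable_const B)) hFm
      (Filter.Eventually.of_forall fun p => ?_)
    simp only [Real.norm_eq_abs, hFdef]
    have h1 : |p.2.1| + ‖p.2.2.1‖ ≤ 2 + (|p.2.1| ^ 2 + ‖p.2.2.1‖ ^ 2 + |p.2.2.2| ^ 2) := by
      nlinarith [abs_nonneg p.2.1, norm_nonneg p.2.2.1, sq_nonneg (|p.2.1| - 1),
        sq_nonneg (‖p.2.2.1‖ - 1), sq_abs p.2.2.2, abs_nonneg p.2.2.2, sq_nonneg p.2.2.2]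
    have h2 : 0 ≤ |p.2.1| + ‖p.2.2.1‖ := by positivity
    rw [abs_of_nonneg (by positivity)]
    have := mul_le_mul_of_nonneg_left h1 hA
    simp only [Pi.add_apply]
    linarith
  refine ⟨∫ p, F p ∂μ₀, ?_⟩
  intro t₁ ht₁ t₂ ht₂ t' ht' x₁ hx₁ x₂ hx₂ x' hx'
  set Δ := |t₁ - t₂| + ‖x₁ - x₂‖ with hΔdef
  have hi₁ := hintk t₁ ht₁ t' ht' x₁ hx₁ x' hx'
  have hi₂ := hintk t₂ ht₂ t' ht' x₂ hx₂ x' hx'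
  have hsub : nnB d σ σ' μ₀ t₁ x₁ t' x' - nnB d σ σ' μ₀ t₂ x₂ t' x'
      = ∫ p, (nnk d σ σ' t₁ x₁ t' x' p - nnk d σ σ' t₂ x₂ t' x' p) ∂μ₀ := by
    rw [nnB, nnB, integral_sub hi₁ hi₂]
  rw [hsub]
  calc |∫ p, (nnk d σ σ' t₁ x₁ t' x' p - nnk d σ σ' t₂ x₂ t' x' p) ∂μ₀|
      ≤ ∫ p, |nnk d σ σ' t₁ x₁ t' x' p - nnk d σ σ' t₂ x₂ t' x' p| ∂μ₀ := by
        simpa [Real.norm_eq_abs] using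
          norm_integral_le_integral_norm (fun p => nnk d σ σ' t₁ x₁ t' x' p - nnk d σ σ' t₂ x₂ t' x' p) (μ := μ₀)
    _ ≤ ∫ p, F p * Δ ∂μ₀ := by
        refine integral_mono_ae (hi₁.sub hi₂).abs (hF_int.mul_const Δ) ?_
        exact hae.mono fun p hp => hkey t₁ ht₁ t₂ ht₂ t' ht' x₁ hx₁ x₂ hx₂ x' hx' p hp
    _ = (∫ p, F p ∂μ₀) * Δ := integral_mul_const Δ F
end
end

section
/- There exists a constant C, depending only on T, R_D and the bounds and Lipschitz constants of σ and σ', such that for all t,t' ∈ [0,T], all x,x' ∈ D, and all parameter tuples (c¹,wᵗ¹,w¹,η¹), (c²,wᵗ²,w²,η²) ∈ ℝ × ℝ × ℝ^d × ℝ: |k(t,x,t',x'; c¹,wᵗ¹,w¹,η¹) − k(t,x,t',x'; c²,wᵗ²,w²,η²)| ≤ C (1 + (c¹)² + (c²)²) (|c¹−c²| + |wᵗ¹−wᵗ²| + ‖w¹−w²‖ + |η¹−η²|). -/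
open MeasureTheory Set

noncomputable section

set_option maxHeartbeats 1000000

private lemma abs_mul_sub_mul' (a b c d : ℝ) :
    |a * b - c * d| ≤ |a| * |b - d| + |d| * |a - c| := by
  have h : a * b - c * d = a * (b - d) + d * (a - c) := by ring
  rw [h]
  calc |a * (b - d) + d * (a - c)| ≤ |a * (b - d)| + |d * (a - c)| := abs_add_le _ _
    _ = |a| * |b - d| + |d| * |a - c| := by rw [abs_mul, abs_mul]

/-- local Lipschitz continuity of `k` in the network parameters:
there is a constant `C` with
`|k(t,x,t',x';p¹) − k(t,x,t',x';p²)|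
  ≤ C (1 + (c¹)² + (c²)²) (|c¹−c²| + |wᵗ¹−wᵗ²| + ‖w¹−w²‖ + |η¹−η²|)`
for all `t,t' ∈ [0,T]`, `x,x' ∈ D` and all parameter tuples `p¹,p²`. -/
theorem nnk_lipschitz_params
    (d : ℕ) (hd : 1 ≤ d) (T : ℝ) (hT : 0 < T)
    (D : Set (EuclideanSpace ℝ (Fin d))) (hD_ne : D.Nonempty) (hD_open : IsOpen D)
    (R_D : ℝ) (hD_sub : D ⊆ Metric.closedBall 0 R_D) (hD_vol : volume D < ⊤)
    (σ σ' : ℝ → ℝ) (C_σ L_σ C_σ' L_σ' : ℝ)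
    (hσ_bdd : ∀ y : ℝ, |σ y| ≤ C_σ) (hσ_lip : LipschitzWith (Real.toNNReal L_σ) σ)
    (hσ_deriv : ∀ y : ℝ, HasDerivAt σ (σ' y) y)
    (hσ'_bdd : ∀ y : ℝ, |σ' y| ≤ C_σ') (hσ'_lip : LipschitzWith (Real.toNNReal L_σ') σ') :
    ∃ C : ℝ, ∀ t ∈ Icc (0:ℝ) T, ∀ t' ∈ Icc (0:ℝ) T, ∀ x ∈ D, ∀ x' ∈ D,
      ∀ p q : ℝ × ℝ × EuclideanSpace ℝ (Fin d) × ℝ,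
        |nnk d σ σ' t x t' x' p - nnk d σ σ' t x t' x' q| ≤
          C * (1 + p.1 ^ 2 + q.1 ^ 2) *
            (|p.1 - q.1| + |p.2.1 - q.2.1| + ‖p.2.2.1 - q.2.2.1‖ + |p.2.2.2 - q.2.2.2|) := by
  obtain ⟨x₀, hx₀⟩ := hD_ne
  have hRD : 0 ≤ R_D := le_trans (norm_nonneg x₀)
    (by simpa [Metric.mem_closedBall, dist_zero_right] using hD_sub hx₀)
  have hCσ : 0 ≤ C_σ := (abs_nonneg _).trans (hσ_bdd 0)
  have hCσ' : 0 ≤ C_σ' := (abs_nonneg _).trans (hσ'_bdd 0)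
  set L : ℝ := max L_σ 0 with hLdef
  set L' : ℝ := max L_σ' 0 with hL'def
  have hLnn : 0 ≤ L := le_max_right _ _
  have hL'nn : 0 ≤ L' := le_max_right _ _
  set M : ℝ := max (max T R_D) 1 with hMdef
  have hM1 : (1:ℝ) ≤ M := le_max_right _ _
  have hMT : T ≤ M := le_trans (le_max_left _ _) (le_max_left _ _)
  have hMR : R_D ≤ M := le_trans (le_max_right _ _) (le_max_left _ _)
  have hMnn : 0 ≤ M := zero_le_one.trans hM1
  set K : ℝ := T ^ 2 + R_D ^ 2 + 1 with hKdef
  have hKnn : 0 ≤ K := by positivity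
  have hlipσ : ∀ a b : ℝ, |σ a - σ b| ≤ L * |a - b| := by
    intro a b
    have h := hσ_lip.dist_le_mul a b
    rw [Real.dist_eq, Real.dist_eq] at h
    simpa [hLdef, Real.coe_toNNReal'] using h
  have hlipσ' : ∀ a b : ℝ, |σ' a - σ' b| ≤ L' * |a - b| := by
    intro a b
    have h := hσ'_lip.dist_le_mul a b
    rw [Real.dist_eq, Real.dist_eq] at h
    simpa [hL'def, Real.coe_toNNReal'] using h
  refine ⟨2 * C_σ * L * M + K * C_σ' ^ 2 + 2 * K * C_σ' * L' * M, ?_⟩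
  rintro t ht t' ht' x hx x' hx' ⟨c1, wt1, w1, η1⟩ ⟨c2, wt2, w2, η2⟩
  simp only [nnk]
  have hxR : ‖x‖ ≤ R_D := by
    simpa [Metric.mem_closedBall, dist_zero_right] using hD_sub hx
  have hx'R : ‖x'‖ ≤ R_D := by
    simpa [Metric.mem_closedBall, dist_zero_right] using hD_sub hx'
  set u1 : ℝ := wt1 * t + (inner ℝ w1 x : ℝ) + η1 with hu1
  set v1 : ℝ := wt1 * t' + (inner ℝ w1 x' : ℝ) + η1 with hv1
  set u2 : ℝ := wt2 * t + (inner ℝ w2 x : ℝ) + η2 with hu2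
  set v2 : ℝ := wt2 * t' + (inner ℝ w2 x' : ℝ) + η2 with hv2
  set S' : ℝ := |wt1 - wt2| + ‖w1 - w2‖ + |η1 - η2| with hS'def
  have hS'nn : 0 ≤ S' := by rw [hS'def]; positivity
  set S : ℝ := |c1 - c2| + |wt1 - wt2| + ‖w1 - w2‖ + |η1 - η2| with hSdef
  have hSnn : 0 ≤ S := by rw [hSdef]; positivity
  have hS'S : S' ≤ S := by rw [hS'def, hSdef]; linarith [abs_nonneg (c1 - c2)]
  set e : ℝ := 1 + c1 ^ 2 + c2 ^ 2 with hedef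
  have he1 : (1:ℝ) ≤ e := by rw [hedef]; nlinarith [sq_nonneg c1, sq_nonneg c2]
  have henn : 0 ≤ e := zero_le_one.trans he1
  -- distance bounds on arguments
  have harg : ∀ (s : ℝ), s ∈ Icc (0:ℝ) T → ∀ (y : EuclideanSpace ℝ (Fin d)), ‖y‖ ≤ R_D →
      |(wt1 * s + (inner ℝ w1 y : ℝ) + η1) - (wt2 * s + (inner ℝ w2 y : ℝ) + η2)| ≤ M * S' := by
    intro s hs y hy
    have hsplit : (wt1 * s + (inner ℝ w1 y : ℝ) + η1) - (wt2 * s + (inner ℝ w2 y : ℝ) + η2)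
        = ((wt1 - wt2) * s + (inner ℝ (w1 - w2) y : ℝ)) + (η1 - η2) := by
      rw [inner_sub_left]; ring
    rw [hsplit]
    have h1 : |(wt1 - wt2) * s| ≤ |wt1 - wt2| * M := by
      rw [abs_mul]
      exact mul_le_mul_of_nonneg_left (by rw [abs_of_nonneg hs.1]; exact hs.2.trans hMT)
        (abs_nonneg _)
    have h2 : |(inner ℝ (w1 - w2) y : ℝ)| ≤ ‖w1 - w2‖ * M :=
      (abs_real_inner_le_norm _ _).trans
        (mul_le_mul_of_nonneg_left (hy.trans hMR) (norm_nonneg _))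
    have h3 : |η1 - η2| ≤ |η1 - η2| * M := le_mul_of_one_le_right (abs_nonneg _) hM1
    calc |((wt1 - wt2) * s + (inner ℝ (w1 - w2) y : ℝ)) + (η1 - η2)|
        ≤ |(wt1 - wt2) * s + (inner ℝ (w1 - w2) y : ℝ)| + |η1 - η2| := abs_add_le _ _
      _ ≤ (|(wt1 - wt2) * s| + |(inner ℝ (w1 - w2) y : ℝ)|) + |η1 - η2| := by
          exact add_le_add_left (abs_add_le _ _) _
      _ ≤ M * S' := by rw [hS'def]; linarith [h1, h2, h3]
  have hdu : |u1 - u2| ≤ M * S' := harg t ht x hxR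
  have hdv : |v1 - v2| ≤ M * S' := harg t' ht' x' hx'R
  -- first term
  have hAB : |σ u1 * σ v1 - σ u2 * σ v2| ≤ 2 * (C_σ * (L * (M * S'))) := by
    calc |σ u1 * σ v1 - σ u2 * σ v2|
        ≤ |σ u1| * |σ v1 - σ v2| + |σ v2| * |σ u1 - σ u2| := abs_mul_sub_mul' _ _ _ _
      _ ≤ C_σ * (L * (M * S')) + C_σ * (L * (M * S')) := by
          have e1 : |σ v1 - σ v2| ≤ L * (M * S') :=
            (hlipσ v1 v2).trans (mul_le_mul_of_nonneg_left hdv hLnn)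
          have e2 : |σ u1 - σ u2| ≤ L * (M * S') :=
            (hlipσ u1 u2).trans (mul_le_mul_of_nonneg_left hdu hLnn)
          gcongr
          · exact hσ_bdd u1
          · exact hσ_bdd v2
      _ = 2 * (C_σ * (L * (M * S'))) := by ring
  -- second term
  have hcc : |c1 ^ 2 - c2 ^ 2| ≤ e * |c1 - c2| := by
    rw [show c1 ^ 2 - c2 ^ 2 = (c1 + c2) * (c1 - c2) by ring, abs_mul]
    apply mul_le_mul_of_nonneg_right _ (abs_nonneg _)
    calc |c1 + c2| ≤ |c1| + |c2| := abs_add_le _ _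
      _ ≤ e := by
          rw [hedef]
          nlinarith [sq_nonneg (|c1| - 1), sq_nonneg (|c2| - 1), sq_abs c1, sq_abs c2]
  have hAB' : |σ' u1 * σ' v1 - σ' u2 * σ' v2| ≤ 2 * (C_σ' * (L' * (M * S'))) := by
    calc |σ' u1 * σ' v1 - σ' u2 * σ' v2|
        ≤ |σ' u1| * |σ' v1 - σ' v2| + |σ' v2| * |σ' u1 - σ' u2| := abs_mul_sub_mul' _ _ _ _
      _ ≤ C_σ' * (L' * (M * S')) + C_σ' * (L' * (M * S')) := by
          have e1 : |σ' v1 - σ' v2| ≤ L' * (M * S') :=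
            (hlipσ' v1 v2).trans (mul_le_mul_of_nonneg_left hdv hL'nn)
          have e2 : |σ' u1 - σ' u2| ≤ L' * (M * S') :=
            (hlipσ' u1 u2).trans (mul_le_mul_of_nonneg_left hdu hL'nn)
          gcongr
          · exact hσ'_bdd u1
          · exact hσ'_bdd v2
      _ = 2 * (C_σ' * (L' * (M * S'))) := by ring
  have hCD : |c1 ^ 2 * σ' u1 * σ' v1 - c2 ^ 2 * σ' u2 * σ' v2|
      ≤ e * |c1 - c2| * C_σ' ^ 2 + c2 ^ 2 * (2 * (C_σ' * (L' * (M * S')))) := by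
    have hsplit : c1 ^ 2 * σ' u1 * σ' v1 - c2 ^ 2 * σ' u2 * σ' v2
        = (c1 ^ 2 - c2 ^ 2) * (σ' u1 * σ' v1)
          + c2 ^ 2 * (σ' u1 * σ' v1 - σ' u2 * σ' v2) := by ring
    rw [hsplit]
    calc |(c1 ^ 2 - c2 ^ 2) * (σ' u1 * σ' v1)
          + c2 ^ 2 * (σ' u1 * σ' v1 - σ' u2 * σ' v2)|
        ≤ |(c1 ^ 2 - c2 ^ 2) * (σ' u1 * σ' v1)|
          + |c2 ^ 2 * (σ' u1 * σ' v1 - σ' u2 * σ' v2)| := abs_add_le _ _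
      _ = |c1 ^ 2 - c2 ^ 2| * |σ' u1 * σ' v1|
          + c2 ^ 2 * |σ' u1 * σ' v1 - σ' u2 * σ' v2| := by
          rw [abs_mul (c1 ^ 2 - c2 ^ 2), abs_mul (c2 ^ 2), abs_of_nonneg (sq_nonneg c2)]
      _ ≤ e * |c1 - c2| * C_σ' ^ 2 + c2 ^ 2 * (2 * (C_σ' * (L' * (M * S')))) := by
          have hprod : |σ' u1 * σ' v1| ≤ C_σ' ^ 2 := by
            rw [abs_mul, sq]
            exact mul_le_mul (hσ'_bdd u1) (hσ'_bdd v1) (abs_nonneg _) hCσ'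
          gcongr
  -- bound on the geometric factor
  have hG : |t * t' + (inner ℝ x x' : ℝ) + 1| ≤ K := by
    have h1 : |t * t'| ≤ T ^ 2 := by
      rw [abs_mul, abs_of_nonneg ht.1, abs_of_nonneg ht'.1, sq]
      exact mul_le_mul ht.2 ht'.2 ht'.1 hT.le
    have h2 : |(inner ℝ x x' : ℝ)| ≤ R_D ^ 2 := by
      refine (abs_real_inner_le_norm _ _).trans ?_
      rw [sq]
      exact mul_le_mul hxR hx'R (norm_nonneg _) hRD
    calc |t * t' + (inner ℝ x x' : ℝ) + 1|
        ≤ |t * t' + (inner ℝ x x' : ℝ)| + |(1:ℝ)| := abs_add_le _ _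
      _ ≤ (|t * t'| + |(inner ℝ x x' : ℝ)|) + 1 := by
          rw [abs_one]; exact add_le_add_left (abs_add_le _ _) _
      _ ≤ K := by rw [hKdef]; linarith
  -- assemble
  have hmain : |(σ u1 * σ v1 + c1 ^ 2 * σ' u1 * σ' v1 * (t * t' + (inner ℝ x x' : ℝ) + 1))
      - (σ u2 * σ v2 + c2 ^ 2 * σ' u2 * σ' v2 * (t * t' + (inner ℝ x x' : ℝ) + 1))|
      ≤ 2 * (C_σ * (L * (M * S')))
        + (e * |c1 - c2| * C_σ' ^ 2 + c2 ^ 2 * (2 * (C_σ' * (L' * (M * S'))))) * K := by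
    have hsplit : (σ u1 * σ v1 + c1 ^ 2 * σ' u1 * σ' v1 * (t * t' + (inner ℝ x x' : ℝ) + 1))
        - (σ u2 * σ v2 + c2 ^ 2 * σ' u2 * σ' v2 * (t * t' + (inner ℝ x x' : ℝ) + 1))
        = (σ u1 * σ v1 - σ u2 * σ v2)
          + (c1 ^ 2 * σ' u1 * σ' v1 - c2 ^ 2 * σ' u2 * σ' v2)
            * (t * t' + (inner ℝ x x' : ℝ) + 1) := by ring
    rw [hsplit]
    calc _ ≤ |σ u1 * σ v1 - σ u2 * σ v2|
          + |(c1 ^ 2 * σ' u1 * σ' v1 - c2 ^ 2 * σ' u2 * σ' v2)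
              * (t * t' + (inner ℝ x x' : ℝ) + 1)| := abs_add_le _ _
      _ = |σ u1 * σ v1 - σ u2 * σ v2|
          + |c1 ^ 2 * σ' u1 * σ' v1 - c2 ^ 2 * σ' u2 * σ' v2|
            * |t * t' + (inner ℝ x x' : ℝ) + 1| := by rw [abs_mul]
      _ ≤ 2 * (C_σ * (L * (M * S')))
          + (e * |c1 - c2| * C_σ' ^ 2 + c2 ^ 2 * (2 * (C_σ' * (L' * (M * S'))))) * K := by
          gcongr
  -- final combination
  have h7 : 2 * (C_σ * (L * (M * S'))) ≤ 2 * C_σ * L * M * (e * S) := by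
    have hS'eS : S' ≤ e * S := (hS'S.trans (le_mul_of_one_le_left hSnn he1))
    calc 2 * (C_σ * (L * (M * S'))) = 2 * C_σ * L * M * S' := by ring
      _ ≤ 2 * C_σ * L * M * (e * S) := by
          apply mul_le_mul_of_nonneg_left hS'eS (by positivity)
  have h8 : e * |c1 - c2| * C_σ' ^ 2 * K ≤ K * C_σ' ^ 2 * (e * S) := by
    have hcS : |c1 - c2| ≤ S := by
      rw [hSdef]
      linarith [abs_nonneg (wt1 - wt2), norm_nonneg (w1 - w2), abs_nonneg (η1 - η2)]
    calc e * |c1 - c2| * C_σ' ^ 2 * K = K * C_σ' ^ 2 * e * |c1 - c2| := by ring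
      _ ≤ K * C_σ' ^ 2 * e * S := by
          apply mul_le_mul_of_nonneg_left hcS (by positivity)
      _ = K * C_σ' ^ 2 * (e * S) := by ring
  have h9 : c2 ^ 2 * (2 * (C_σ' * (L' * (M * S')))) * K ≤ 2 * K * C_σ' * L' * M * (e * S) := by
    have hc2e : c2 ^ 2 ≤ e := by rw [hedef]; nlinarith [sq_nonneg c1]
    have : c2 ^ 2 * S' ≤ e * S := mul_le_mul hc2e hS'S hS'nn henn
    calc c2 ^ 2 * (2 * (C_σ' * (L' * (M * S')))) * K
        = 2 * K * C_σ' * L' * M * (c2 ^ 2 * S') := by ring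
      _ ≤ 2 * K * C_σ' * L' * M * (e * S) := by
          apply mul_le_mul_of_nonneg_left this (by positivity)
  calc |(σ u1 * σ v1 + c1 ^ 2 * σ' u1 * σ' v1 * (t * t' + (inner ℝ x x' : ℝ) + 1))
      - (σ u2 * σ v2 + c2 ^ 2 * σ' u2 * σ' v2 * (t * t' + (inner ℝ x x' : ℝ) + 1))|
      ≤ 2 * (C_σ * (L * (M * S')))
        + (e * |c1 - c2| * C_σ' ^ 2 + c2 ^ 2 * (2 * (C_σ' * (L' * (M * S'))))) * K := hmain
    _ ≤ (2 * C_σ * L * M + K * C_σ' ^ 2 + 2 * K * C_σ' * L' * M) * e * S := by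
        linarith [h7, h8, h9]
end
end

section
/- There exists a constant L, depending only on T, vol(D), R_D, the bounds and Lipschitz constants of σ and σ', and the moments of μ₀, such that for every û ∈ L²(D_T) and all (t¹,x¹), (t²,x²) ∈ D_T, |(T_{B₀}û)(t¹,x¹) − (T_{B₀}û)(t²,x²)| ≤ L ‖û‖_{L²(D_T)} (|t¹−t²| + ‖x¹−x²‖). -/
set_option maxHeartbeats 1000000


open MeasureTheory Set
open scoped ENNReal NNReal

noncomputable section

/-- Lebesgue measure restricted to the time-space cylinder `D_T = (0,T) × D`. -/
def μDT (d : ℕ) (T : ℝ) (D : Set (EuclideanSpace ℝ (Fin d))) :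
    Measure (ℝ × EuclideanSpace ℝ (Fin d)) :=
  volume.restrict (Ioo (0:ℝ) T ×ˢ D)

/-- The neural-network integral operator
`(T_{B₀}û)(t,x) = ∫₀^T ∫_D B₀(t,x,t',x') û(t',x') dx' dt'`. -/
def nnT (d : ℕ) (T : ℝ) (D : Set (EuclideanSpace ℝ (Fin d))) (σ σ' : ℝ → ℝ)
    (μ₀ : Measure (ℝ × ℝ × EuclideanSpace ℝ (Fin d) × ℝ))
    (u : ℝ × EuclideanSpace ℝ (Fin d) → ℝ)
    (z : ℝ × EuclideanSpace ℝ (Fin d)) : ℝ :=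
  ∫ z', nnB d σ σ' μ₀ z.1 z.2 z'.1 z'.2 * u z' ∂(μDT d T D)

/-- The `L²(D_T × D_T)` norm of the kernel `B₀`. -/
def nnBnormL2 (d : ℕ) (T : ℝ) (D : Set (EuclideanSpace ℝ (Fin d))) (σ σ' : ℝ → ℝ)
    (μ₀ : Measure (ℝ × ℝ × EuclideanSpace ℝ (Fin d) × ℝ)) : ℝ :=
  Real.sqrt (∫ z, (∫ z', (nnB d σ σ' μ₀ z.1 z.2 z'.1 z'.2) ^ 2 ∂(μDT d T D)) ∂(μDT d T D))


-- continuity of nnk in ((t',x'),p)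
lemma nnk_cont {d : ℕ} {σ σ' : ℝ → ℝ} (hσ : Continuous σ) (hσ' : Continuous σ')
    (t : ℝ) (x : EuclideanSpace ℝ (Fin d)) :
    Continuous fun q : (ℝ × EuclideanSpace ℝ (Fin d)) × (ℝ × ℝ × EuclideanSpace ℝ (Fin d) × ℝ) =>
      nnk d σ σ' t x q.1.1 q.1.2 q.2 := by
  unfold nnk
  have hwt : Continuous fun q : (ℝ × EuclideanSpace ℝ (Fin d)) × (ℝ × ℝ × EuclideanSpace ℝ (Fin d) × ℝ) => q.2.2.1 := by fun_prop
  have hw : Continuous fun q : (ℝ × EuclideanSpace ℝ (Fin d)) × (ℝ × ℝ × EuclideanSpace ℝ (Fin d) × ℝ) => q.2.2.2.1 := by fun_prop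
  have hη : Continuous fun q : (ℝ × EuclideanSpace ℝ (Fin d)) × (ℝ × ℝ × EuclideanSpace ℝ (Fin d) × ℝ) => q.2.2.2.2 := by fun_prop
  have ht' : Continuous fun q : (ℝ × EuclideanSpace ℝ (Fin d)) × (ℝ × ℝ × EuclideanSpace ℝ (Fin d) × ℝ) => q.1.1 := by fun_prop
  have hx' : Continuous fun q : (ℝ × EuclideanSpace ℝ (Fin d)) × (ℝ × ℝ × EuclideanSpace ℝ (Fin d) × ℝ) => q.1.2 := by fun_prop
  have hcc : Continuous fun q : (ℝ × EuclideanSpace ℝ (Fin d)) × (ℝ × ℝ × EuclideanSpace ℝ (Fin d) × ℝ) => q.2.1 := by fun_prop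
  have e1 : Continuous fun q : (ℝ × EuclideanSpace ℝ (Fin d)) × (ℝ × ℝ × EuclideanSpace ℝ (Fin d) × ℝ) =>
      q.2.2.1 * t + (inner ℝ q.2.2.2.1 x : ℝ) + q.2.2.2.2 :=
    ((hwt.mul continuous_const).add (hw.inner continuous_const)).add hη
  have e2 : Continuous fun q : (ℝ × EuclideanSpace ℝ (Fin d)) × (ℝ × ℝ × EuclideanSpace ℝ (Fin d) × ℝ) =>
      q.2.2.1 * q.1.1 + (inner ℝ q.2.2.2.1 q.1.2 : ℝ) + q.2.2.2.2 :=
    ((hwt.mul ht').add (hw.inner hx')).add hη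
  have e3 : Continuous fun q : (ℝ × EuclideanSpace ℝ (Fin d)) × (ℝ × ℝ × EuclideanSpace ℝ (Fin d) × ℝ) =>
      t * q.1.1 + (inner ℝ x q.1.2 : ℝ) + 1 :=
    ((continuous_const.mul ht').add (continuous_const.inner hx')).add continuous_const
  exact ((hσ.comp e1).mul (hσ.comp e2)).add
    ((((hcc.pow 2).mul (hσ'.comp e1)).mul (hσ'.comp e2)).mul e3)

-- L¹ bound by L² norm on a finite measure
lemma integral_abs_le_sqrt_mul {α : Type*} [MeasurableSpace α] (μ : Measure α)
    [IsFiniteMeasure μ] {u : α → ℝ} (hu : MemLp u 2 μ) :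
    ∫ z, |u z| ∂μ ≤ (μ univ).toReal ^ (1/2 : ℝ) * (eLpNorm u 2 μ).toReal := by
  have hu_int : Integrable u μ := hu.integrable one_le_two
  have h1 : ENNReal.ofReal (∫ z, |u z| ∂μ) = ∫⁻ z, ‖u z‖₊ ∂μ := by
    simpa [Real.norm_eq_abs, enorm_eq_nnnorm] using ofReal_integral_norm_eq_lintegral_enorm hu_int
  have h2 : eLpNorm u 1 μ ≤ eLpNorm u 2 μ * (μ univ) ^ (1/2 : ℝ) := by
    have h := eLpNorm_le_eLpNorm_mul_rpow_measure_univ (μ := μ)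
      (by norm_num : (1:ℝ≥0∞) ≤ 2) hu.1
    have : 1 / (1:ℝ≥0∞).toReal - 1 / (2:ℝ≥0∞).toReal = (1/2 : ℝ) := by norm_num
    rwa [this] at h
  have h3 : eLpNorm u 1 μ = ∫⁻ z, ‖u z‖₊ ∂μ := eLpNorm_one_eq_lintegral_enorm
  have hfin : eLpNorm u 2 μ * (μ univ) ^ (1/2 : ℝ) ≠ ⊤ :=
    ENNReal.mul_ne_top hu.2.ne
      (ENNReal.rpow_ne_top_of_nonneg (by norm_num) (measure_ne_top μ univ))
  have h4 : (∫ z, |u z| ∂μ) ≤ (eLpNorm u 2 μ * (μ univ) ^ (1/2 : ℝ)).toReal := by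
    have := ENNReal.toReal_mono hfin (h3 ▸ h2 : (∫⁻ z, ‖u z‖₊ ∂μ) ≤ _)
    rwa [← h1, ENNReal.toReal_ofReal (integral_nonneg fun z => abs_nonneg _)] at this
  calc ∫ z, |u z| ∂μ ≤ (eLpNorm u 2 μ * (μ univ) ^ (1/2 : ℝ)).toReal := h4
    _ = (μ univ).toReal ^ (1/2 : ℝ) * (eLpNorm u 2 μ).toReal := by
        rw [ENNReal.toReal_mul, ENNReal.toReal_rpow, mul_comm]

lemma lip_of {L : ℝ} {f : ℝ → ℝ} (h : LipschitzWith (Real.toNNReal L) f) (a b : ℝ) :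
    |f a - f b| ≤ max L 0 * |a - b| := by
  have := h.dist_le_mul a b
  simpa [Real.dist_eq, Real.coe_toNNReal'] using this

lemma nnk_abs_bound {d : ℕ} {σ σ' : ℝ → ℝ} {C_σ C_σ' R' T R_D : ℝ}
    (hσ : ∀ y, |σ y| ≤ C_σ) (hσ' : ∀ y, |σ' y| ≤ C_σ')
    {t t' : ℝ} {x x' : EuclideanSpace ℝ (Fin d)}
    {p : ℝ × ℝ × EuclideanSpace ℝ (Fin d) × ℝ} (hc : |p.1| ≤ R')
    (ht : |t| ≤ T) (ht' : |t'| ≤ T) (hx : ‖x‖ ≤ R_D) (hx' : ‖x'‖ ≤ R_D) :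
    |nnk d σ σ' t x t' x' p| ≤ C_σ ^ 2 + R' ^ 2 * C_σ' ^ 2 * (T ^ 2 + R_D ^ 2 + 1) := by
  have hA := hσ (p.2.1 * t + (inner ℝ p.2.2.1 x : ℝ) + p.2.2.2)
  have hB := hσ (p.2.1 * t' + (inner ℝ p.2.2.1 x' : ℝ) + p.2.2.2)
  have hS := hσ' (p.2.1 * t + (inner ℝ p.2.2.1 x : ℝ) + p.2.2.2)
  have hS' := hσ' (p.2.1 * t' + (inner ℝ p.2.2.1 x' : ℝ) + p.2.2.2)
  have h0A : (0:ℝ) ≤ C_σ := le_trans (abs_nonneg _) hA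
  have h0S : (0:ℝ) ≤ C_σ' := le_trans (abs_nonneg _) hS
  have hc2 : p.1 ^ 2 ≤ R' ^ 2 := by nlinarith [abs_nonneg p.1, sq_abs p.1]
  have hI : |(inner ℝ x x' : ℝ)| ≤ R_D ^ 2 :=
    le_trans (abs_real_inner_le_norm x x') (by nlinarith [norm_nonneg x, norm_nonneg x'])
  have htt : |t * t'| ≤ T ^ 2 := by
    rw [abs_mul]; nlinarith [abs_nonneg t, abs_nonneg t']
  have hP : |t * t' + (inner ℝ x x' : ℝ) + 1| ≤ T ^ 2 + R_D ^ 2 + 1 := by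
    have h1 := abs_le.1 hI; have h2 := abs_le.1 htt
    rw [abs_le]; constructor <;> [linarith [h1.1, h2.1]; linarith [h1.2, h2.2]]
  calc |nnk d σ σ' t x t' x' p|
      ≤ |σ (p.2.1 * t + (inner ℝ p.2.2.1 x : ℝ) + p.2.2.2) *
          σ (p.2.1 * t' + (inner ℝ p.2.2.1 x' : ℝ) + p.2.2.2)| +
        |p.1 ^ 2 * σ' (p.2.1 * t + (inner ℝ p.2.2.1 x : ℝ) + p.2.2.2) *
          σ' (p.2.1 * t' + (inner ℝ p.2.2.1 x' : ℝ) + p.2.2.2) *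
          (t * t' + (inner ℝ x x' : ℝ) + 1)| := abs_add_le _ _
    _ = |σ (p.2.1 * t + (inner ℝ p.2.2.1 x : ℝ) + p.2.2.2)| *
          |σ (p.2.1 * t' + (inner ℝ p.2.2.1 x' : ℝ) + p.2.2.2)| +
        p.1 ^ 2 * (|σ' (p.2.1 * t + (inner ℝ p.2.2.1 x : ℝ) + p.2.2.2)| *
          (|σ' (p.2.1 * t' + (inner ℝ p.2.2.1 x' : ℝ) + p.2.2.2)| *
            |t * t' + (inner ℝ x x' : ℝ) + 1|)) := by
        rw [abs_mul, abs_mul, abs_mul, abs_mul, abs_of_nonneg (sq_nonneg p.1)]; ring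
    _ ≤ C_σ * C_σ + R' ^ 2 * (C_σ' * (C_σ' * (T ^ 2 + R_D ^ 2 + 1))) := by
        refine add_le_add (mul_le_mul hA hB (abs_nonneg _) h0A) ?_
        refine mul_le_mul hc2 ?_ (by positivity) (by positivity)
        refine mul_le_mul hS ?_ (by positivity) h0S
        exact mul_le_mul hS' hP (abs_nonneg _) h0S
    _ = C_σ ^ 2 + R' ^ 2 * C_σ' ^ 2 * (T ^ 2 + R_D ^ 2 + 1) := by ring

lemma nnk_diff_bound {d : ℕ} {σ σ' : ℝ → ℝ} {C_σ Lσ C_σ' Lσ' R' T R_D : ℝ}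
    (hσ : ∀ y, |σ y| ≤ C_σ) (hσl : ∀ a b : ℝ, |σ a - σ b| ≤ Lσ * |a - b|)
    (hσ' : ∀ y, |σ' y| ≤ C_σ') (hσ'l : ∀ a b : ℝ, |σ' a - σ' b| ≤ Lσ' * |a - b|)
    (hLσ : 0 ≤ Lσ) (hLσ' : 0 ≤ Lσ') (hT : 0 ≤ T) (hRD : 0 ≤ R_D)
    {t₁ t₂ t' : ℝ} {x₁ x₂ x' : EuclideanSpace ℝ (Fin d)}
    {p : ℝ × ℝ × EuclideanSpace ℝ (Fin d) × ℝ} (hc : |p.1| ≤ R')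
    (ht₁ : |t₁| ≤ T) (ht₂ : |t₂| ≤ T) (ht' : |t'| ≤ T)
    (hx₁ : ‖x₁‖ ≤ R_D) (hx₂ : ‖x₂‖ ≤ R_D) (hx' : ‖x'‖ ≤ R_D) :
    |nnk d σ σ' t₁ x₁ t' x' p - nnk d σ σ' t₂ x₂ t' x' p| ≤
      ((C_σ * Lσ + R' ^ 2 * C_σ' * Lσ' * (T ^ 2 + R_D ^ 2 + 1)) * (|p.2.1| + ‖p.2.2.1‖)
        + R' ^ 2 * C_σ' ^ 2 * (T + R_D)) * (|t₁ - t₂| + ‖x₁ - x₂‖) := by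
  set c := p.1 with hc_def
  set wt := p.2.1 with hwt_def
  set w := p.2.2.1 with hw_def
  set η := p.2.2.2 with hη_def
  set a₁ := wt * t₁ + (inner ℝ w x₁ : ℝ) + η with ha₁
  set a₂ := wt * t₂ + (inner ℝ w x₂ : ℝ) + η with ha₂
  set b := wt * t' + (inner ℝ w x' : ℝ) + η with hb
  set P₁ := t₁ * t' + (inner ℝ x₁ x' : ℝ) + 1 with hP₁def
  set P₂ := t₂ * t' + (inner ℝ x₂ x' : ℝ) + 1 with hP₂def
  set Δ := |t₁ - t₂| + ‖x₁ - x₂‖ with hΔdef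
  set W := |wt| + ‖w‖ with hWdef
  have hΔ0 : 0 ≤ Δ := by positivity
  have hW0 : 0 ≤ W := by positivity
  have h0A : (0:ℝ) ≤ C_σ := le_trans (abs_nonneg _) (hσ 0)
  have h0S : (0:ℝ) ≤ C_σ' := le_trans (abs_nonneg _) (hσ' 0)
  have hc2 : c ^ 2 ≤ R' ^ 2 := by nlinarith [abs_nonneg c, sq_abs c]
  -- |a₁ - a₂| ≤ W * Δ
  have ha : |a₁ - a₂| ≤ W * Δ := by
    have heq : a₁ - a₂ = wt * (t₁ - t₂) + (inner ℝ w (x₁ - x₂) : ℝ) := by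
      rw [inner_sub_right]; ring
    calc |a₁ - a₂| = |wt * (t₁ - t₂) + (inner ℝ w (x₁ - x₂) : ℝ)| := by rw [heq]
      _ ≤ |wt * (t₁ - t₂)| + |(inner ℝ w (x₁ - x₂) : ℝ)| := abs_add_le _ _
      _ ≤ |wt| * |t₁ - t₂| + ‖w‖ * ‖x₁ - x₂‖ :=
          add_le_add (le_of_eq (abs_mul _ _)) (abs_real_inner_le_norm _ _)
      _ ≤ W * Δ := by
          have h1 : 0 ≤ |wt| * ‖x₁ - x₂‖ := by positivity
          have h2 : 0 ≤ ‖w‖ * |t₁ - t₂| := by positivity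
          rw [hWdef, hΔdef]; ring_nf; nlinarith [h1, h2]
  -- |P₁ - P₂| ≤ (T + R_D) * Δ
  have hPd : |P₁ - P₂| ≤ (T + R_D) * Δ := by
    have heq : P₁ - P₂ = (t₁ - t₂) * t' + (inner ℝ (x₁ - x₂) x' : ℝ) := by
      rw [inner_sub_left]; ring
    calc |P₁ - P₂| = |(t₁ - t₂) * t' + (inner ℝ (x₁ - x₂) x' : ℝ)| := by rw [heq]
      _ ≤ |(t₁ - t₂) * t'| + |(inner ℝ (x₁ - x₂) x' : ℝ)| := abs_add_le _ _
      _ ≤ |t₁ - t₂| * |t'| + ‖x₁ - x₂‖ * ‖x'‖ :=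
          add_le_add (le_of_eq (abs_mul _ _)) (abs_real_inner_le_norm _ _)
      _ ≤ (T + R_D) * Δ := by
          have h1 : |t₁ - t₂| * |t'| ≤ |t₁ - t₂| * T := by
            exact mul_le_mul_of_nonneg_left ht' (abs_nonneg _)
          have h2 : ‖x₁ - x₂‖ * ‖x'‖ ≤ ‖x₁ - x₂‖ * R_D := by
            exact mul_le_mul_of_nonneg_left hx' (norm_nonneg _)
          have h3 : 0 ≤ |t₁ - t₂| * R_D := by positivity
          have h4 : 0 ≤ ‖x₁ - x₂‖ * T := mul_nonneg (norm_nonneg _) hT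
          rw [hΔdef]; nlinarith [h1, h2, h3, h4]
  -- |P₁| ≤ T^2 + R_D^2 + 1
  have hP1 : |P₁| ≤ T ^ 2 + R_D ^ 2 + 1 := by
    have hI : |(inner ℝ x₁ x' : ℝ)| ≤ R_D ^ 2 :=
      le_trans (abs_real_inner_le_norm x₁ x') (by nlinarith [norm_nonneg x₁, norm_nonneg x'])
    have htt : |t₁ * t'| ≤ T ^ 2 := by
      rw [abs_mul]; nlinarith [abs_nonneg t₁, abs_nonneg t']
    have h1 := abs_le.1 hI; have h2 := abs_le.1 htt
    rw [hP₁def, abs_le]; constructor <;> [linarith [h1.1, h2.1]; linarith [h1.2, h2.2]]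
  have hσd : |σ a₁ - σ a₂| ≤ Lσ * (W * Δ) :=
    le_trans (hσl a₁ a₂) (mul_le_mul_of_nonneg_left ha hLσ)
  have hσ'd : |σ' a₁ - σ' a₂| ≤ Lσ' * (W * Δ) :=
    le_trans (hσ'l a₁ a₂) (mul_le_mul_of_nonneg_left ha hLσ')
  have key : nnk d σ σ' t₁ x₁ t' x' p - nnk d σ σ' t₂ x₂ t' x' p =
      (σ a₁ - σ a₂) * σ b + (c ^ 2 * σ' b) * ((σ' a₁ - σ' a₂) * P₁ + σ' a₂ * (P₁ - P₂)) := by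
    simp only [nnk, ← hc_def, ← hwt_def, ← hw_def, ← hη_def, ← ha₁, ← ha₂, ← hb, ← hP₁def, ← hP₂def]
    ring
  calc |nnk d σ σ' t₁ x₁ t' x' p - nnk d σ σ' t₂ x₂ t' x' p|
      = |(σ a₁ - σ a₂) * σ b + (c ^ 2 * σ' b) * ((σ' a₁ - σ' a₂) * P₁ + σ' a₂ * (P₁ - P₂))| := by
        rw [key]
    _ ≤ |(σ a₁ - σ a₂) * σ b| + |(c ^ 2 * σ' b) * ((σ' a₁ - σ' a₂) * P₁ + σ' a₂ * (P₁ - P₂))| :=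
        abs_add_le _ _
    _ ≤ |σ a₁ - σ a₂| * |σ b| +
        (c ^ 2 * |σ' b|) * (|σ' a₁ - σ' a₂| * |P₁| + |σ' a₂| * |P₁ - P₂|) := by
        rw [abs_mul, abs_mul, abs_mul, abs_of_nonneg (sq_nonneg c)]
        refine add_le_add le_rfl (mul_le_mul_of_nonneg_left ?_ (by positivity))
        exact le_trans (abs_add_le _ _) (by rw [abs_mul, abs_mul])
    _ ≤ (Lσ * (W * Δ)) * C_σ +
        (R' ^ 2 * C_σ') * ((Lσ' * (W * Δ)) * (T ^ 2 + R_D ^ 2 + 1) + C_σ' * ((T + R_D) * Δ)) := by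
        refine add_le_add (mul_le_mul hσd (hσ b) (abs_nonneg _) (by positivity)) ?_
        refine mul_le_mul (mul_le_mul hc2 (hσ' b) (abs_nonneg _) (by positivity)) ?_
          (by positivity) (mul_nonneg (by positivity) h0S)
        refine add_le_add (mul_le_mul hσ'd hP1 (abs_nonneg _) (by positivity)) ?_
        exact mul_le_mul (hσ' a₂) hPd (abs_nonneg _) h0S
    _ = ((C_σ * Lσ + R' ^ 2 * C_σ' * Lσ' * (T ^ 2 + R_D ^ 2 + 1)) * W
          + R' ^ 2 * C_σ' ^ 2 * (T + R_D)) * Δ := by ring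


/-- Lipschitz continuity of `T_{B₀}û`: there is a constant `L` such
that `|(T_{B₀}û)(t¹,x¹) − (T_{B₀}û)(t²,x²)| ≤ L ‖û‖_{L²(D_T)} (|t¹−t²| + ‖x¹−x²‖)`
for every `û ∈ L²(D_T)` and all `(t¹,x¹), (t²,x²) ∈ D_T`. -/
theorem nnT_lipschitz
    (d : ℕ) (hd : 1 ≤ d) (T : ℝ) (hT : 0 < T)
    (D : Set (EuclideanSpace ℝ (Fin d))) (hD_ne : D.Nonempty) (hD_open : IsOpen D)
    (R_D : ℝ) (hD_sub : D ⊆ Metric.closedBall 0 R_D) (hD_vol : volume D < ⊤)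
    (σ σ' : ℝ → ℝ) (C_σ L_σ C_σ' L_σ' : ℝ)
    (hσ_bdd : ∀ y : ℝ, |σ y| ≤ C_σ) (hσ_lip : LipschitzWith (Real.toNNReal L_σ) σ)
    (hσ_deriv : ∀ y : ℝ, HasDerivAt σ (σ' y) y)
    (hσ'_bdd : ∀ y : ℝ, |σ' y| ≤ C_σ') (hσ'_lip : LipschitzWith (Real.toNNReal L_σ') σ')
    (μ₀ : Measure (ℝ × ℝ × EuclideanSpace ℝ (Fin d) × ℝ)) [IsProbabilityMeasure μ₀]
    (hc_supp : ∃ R : ℝ, μ₀ {p | R < |p.1|} = 0)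
    (hmoment : Integrable
      (fun p : ℝ × ℝ × EuclideanSpace ℝ (Fin d) × ℝ =>
        |p.2.1| ^ 2 + ‖p.2.2.1‖ ^ 2 + |p.2.2.2| ^ 2) μ₀) :
    ∃ L : ℝ, ∀ u : ℝ × EuclideanSpace ℝ (Fin d) → ℝ, MemLp u 2 (μDT d T D) →
      ∀ z₁ ∈ Ioo (0:ℝ) T ×ˢ D, ∀ z₂ ∈ Ioo (0:ℝ) T ×ˢ D,
        |nnT d T D σ σ' μ₀ u z₁ - nnT d T D σ σ' μ₀ u z₂| ≤
          L * (eLpNorm u 2 (μDT d T D)).toReal * (|z₁.1 - z₂.1| + ‖z₁.2 - z₂.2‖) := by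
  classical
  haveI : SecondCountableTopology (ℝ × ℝ × EuclideanSpace ℝ (Fin d) × ℝ) := inferInstance
  haveI : SecondCountableTopology (ℝ × EuclideanSpace ℝ (Fin d)) := inferInstance
  obtain ⟨R, hR⟩ := hc_supp
  set R' : ℝ := max R 0 with hR'def
  have hR'0 : 0 ≤ R' := le_max_right _ _
  have hae : ∀ᵐ p ∂μ₀, |p.1| ≤ R' := by
    rw [ae_iff]
    refine measure_mono_null ?_ hR
    intro p hp
    simp only [mem_setOf_eq, not_le] at hp ⊢
    exact lt_of_le_of_lt (le_max_left R 0) hp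
  have hσc : Continuous σ := hσ_lip.continuous
  have hσ'c : Continuous σ' := hσ'_lip.continuous
  set Lσ : ℝ := max L_σ 0 with hLσdef
  set Lσ' : ℝ := max L_σ' 0 with hLσ'def
  have hσl : ∀ a b : ℝ, |σ a - σ b| ≤ Lσ * |a - b| := lip_of hσ_lip
  have hσ'l : ∀ a b : ℝ, |σ' a - σ' b| ≤ Lσ' * |a - b| := lip_of hσ'_lip
  have hLσ0 : 0 ≤ Lσ := le_max_right _ _
  have hLσ'0 : 0 ≤ Lσ' := le_max_right _ _
  have hT0 : 0 ≤ T := hT.le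
  have hRD0 : 0 ≤ R_D := by
    obtain ⟨x0, hx0⟩ := hD_ne
    have := hD_sub hx0
    rw [Metric.mem_closedBall] at this
    exact le_trans dist_nonneg this
  have h0Cσ : 0 ≤ C_σ := le_trans (abs_nonneg _) (hσ_bdd 0)
  have h0Cσ' : 0 ≤ C_σ' := le_trans (abs_nonneg _) (hσ'_bdd 0)
  set M : ℝ := C_σ ^ 2 + R' ^ 2 * C_σ' ^ 2 * (T ^ 2 + R_D ^ 2 + 1) with hMdef
  set A₁ : ℝ := C_σ * Lσ + R' ^ 2 * C_σ' * Lσ' * (T ^ 2 + R_D ^ 2 + 1) with hA₁def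
  set A₂ : ℝ := R' ^ 2 * C_σ' ^ 2 * (T + R_D) with hA₂def
  have hA₁0 : 0 ≤ A₁ :=
    add_nonneg (mul_nonneg h0Cσ hLσ0)
      (mul_nonneg (mul_nonneg (mul_nonneg (by positivity) h0Cσ') hLσ'0) (by positivity))
  have hA₂0 : 0 ≤ A₂ := mul_nonneg (by positivity) (by linarith)
  set Cf : (ℝ × ℝ × EuclideanSpace ℝ (Fin d) × ℝ) → ℝ :=
    fun p => A₁ * (|p.2.1| + ‖p.2.2.1‖) + A₂ with hCfdef
  have hW_int : Integrable (fun p : ℝ × ℝ × EuclideanSpace ℝ (Fin d) × ℝ =>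
      |p.2.1| + ‖p.2.2.1‖) μ₀ := by
    refine Integrable.mono' ((integrable_const (2:ℝ)).add hmoment) ?_ ?_
    · exact (Continuous.aestronglyMeasurable (by fun_prop))
    · refine ae_of_all _ fun p => ?_
      have h1 : |p.2.1| ≤ 1 + |p.2.1| ^ 2 := by nlinarith [sq_nonneg (|p.2.1| - 1)]
      have h2 : ‖p.2.2.1‖ ≤ 1 + ‖p.2.2.1‖ ^ 2 := by nlinarith [sq_nonneg (‖p.2.2.1‖ - 1)]
      have h3 : (0:ℝ) ≤ |p.2.2.2| ^ 2 := sq_nonneg _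
      rw [Real.norm_eq_abs, abs_of_nonneg (by positivity)]
      simp only [Pi.add_apply]
      linarith
  have hCf_int : Integrable Cf μ₀ := (hW_int.const_mul A₁).add (integrable_const A₂)
  set K₀ : ℝ := ∫ p, Cf p ∂μ₀ with hK₀def
  have hK₀0 : 0 ≤ K₀ :=
    integral_nonneg fun p => add_nonneg (mul_nonneg hA₁0 (by positivity)) hA₂0
  have hsmeas : MeasurableSet (Ioo (0:ℝ) T ×ˢ D) :=
    measurableSet_Ioo.prod hD_open.measurableSet
  have hfin : IsFiniteMeasure (μDT d T D) := by
    constructor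
    rw [μDT, Measure.restrict_apply_univ, Measure.volume_eq_prod, Measure.prod_prod, Real.volume_Ioo]
    exact ENNReal.mul_lt_top ENNReal.ofReal_lt_top hD_vol
  have hmem : ∀ z ∈ Ioo (0:ℝ) T ×ˢ D, |z.1| ≤ T ∧ ‖z.2‖ ≤ R_D := by
    intro z hz
    rw [mem_prod] at hz
    exact ⟨by rw [abs_of_pos hz.1.1]; exact hz.1.2.le,
      mem_closedBall_zero_iff.1 (hD_sub hz.2)⟩
  have hnnk_cont : ∀ (t t' : ℝ) (x x' : EuclideanSpace ℝ (Fin d)),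
      Continuous fun p => nnk d σ σ' t x t' x' p := by
    intro t t' x x'
    have hconst : Continuous fun _ : ℝ × ℝ × EuclideanSpace ℝ (Fin d) × ℝ =>
        ((t', x') : ℝ × EuclideanSpace ℝ (Fin d)) := continuous_const
    exact (nnk_cont hσc hσ'c t x).comp (hconst.prodMk continuous_id)
  have hnnk_int : ∀ z ∈ Ioo (0:ℝ) T ×ˢ D, ∀ z' ∈ Ioo (0:ℝ) T ×ˢ D,
      Integrable (fun p => nnk d σ σ' z.1 z.2 z'.1 z'.2 p) μ₀ := by
    intro z hz z' hz'
    refine Integrable.mono' (integrable_const M)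
      ((hnnk_cont _ _ _ _).aestronglyMeasurable) ?_
    filter_upwards [hae] with p hp
    rw [Real.norm_eq_abs]
    exact nnk_abs_bound hσ_bdd hσ'_bdd hp (hmem z hz).1 (hmem z' hz').1
      (hmem z hz).2 (hmem z' hz').2
  have hBbd : ∀ z ∈ Ioo (0:ℝ) T ×ˢ D, ∀ z' ∈ Ioo (0:ℝ) T ×ˢ D,
      |nnB d σ σ' μ₀ z.1 z.2 z'.1 z'.2| ≤ M := by
    intro z hz z' hz'
    have hle : ‖∫ p, nnk d σ σ' z.1 z.2 z'.1 z'.2 p ∂μ₀‖ ≤ ∫ _, M ∂μ₀ := by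
      refine norm_integral_le_of_norm_le (integrable_const M) ?_
      filter_upwards [hae] with p hp
      rw [Real.norm_eq_abs]
      exact nnk_abs_bound hσ_bdd hσ'_bdd hp (hmem z hz).1 (hmem z' hz').1
        (hmem z hz).2 (hmem z' hz').2
    rw [nnB, ← Real.norm_eq_abs]
    simpa using hle
  have hB_sm : ∀ (t : ℝ) (x : EuclideanSpace ℝ (Fin d)),
      StronglyMeasurable fun z' : ℝ × EuclideanSpace ℝ (Fin d) =>
        nnB d σ σ' μ₀ t x z'.1 z'.2 := fun t x =>
    ((nnk_cont hσc hσ'c t x).stronglyMeasurable).integral_prod_right'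
  have hBdiff : ∀ z₁ ∈ Ioo (0:ℝ) T ×ˢ D, ∀ z₂ ∈ Ioo (0:ℝ) T ×ˢ D,
      ∀ z' ∈ Ioo (0:ℝ) T ×ˢ D,
      |nnB d σ σ' μ₀ z₁.1 z₁.2 z'.1 z'.2 - nnB d σ σ' μ₀ z₂.1 z₂.2 z'.1 z'.2| ≤
        K₀ * (|z₁.1 - z₂.1| + ‖z₁.2 - z₂.2‖) := by
    intro z₁ h1 z₂ h2 z' h'
    rw [nnB, nnB, ← integral_sub (hnnk_int z₁ h1 z' h') (hnnk_int z₂ h2 z' h'),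
      ← Real.norm_eq_abs]
    calc ‖∫ p, (nnk d σ σ' z₁.1 z₁.2 z'.1 z'.2 p - nnk d σ σ' z₂.1 z₂.2 z'.1 z'.2 p) ∂μ₀‖
        ≤ ∫ p, Cf p * (|z₁.1 - z₂.1| + ‖z₁.2 - z₂.2‖) ∂μ₀ := by
          refine norm_integral_le_of_norm_le (hCf_int.mul_const _) ?_
          filter_upwards [hae] with p hp
          rw [Real.norm_eq_abs]
          exact nnk_diff_bound hσ_bdd hσl hσ'_bdd hσ'l hLσ0 hLσ'0 hT0 hRD0 hp
            (hmem z₁ h1).1 (hmem z₂ h2).1 (hmem z' h').1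
            (hmem z₁ h1).2 (hmem z₂ h2).2 (hmem z' h').2
      _ = K₀ * (|z₁.1 - z₂.1| + ‖z₁.2 - z₂.2‖) := integral_mul_const _ _
  refine ⟨K₀ * ((μDT d T D) univ).toReal ^ (1/2 : ℝ), ?_⟩
  intro u hu z₁ hz₁ z₂ hz₂
  have hΔ0 : (0:ℝ) ≤ |z₁.1 - z₂.1| + ‖z₁.2 - z₂.2‖ := by positivity
  have hu_int : Integrable u (μDT d T D) := hu.integrable one_le_two
  have haeS : ∀ᵐ z' ∂(μDT d T D), z' ∈ Ioo (0:ℝ) T ×ˢ D := by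
    rw [μDT]; exact ae_restrict_mem hsmeas
  have hint : ∀ z ∈ Ioo (0:ℝ) T ×ˢ D,
      Integrable (fun z' => nnB d σ σ' μ₀ z.1 z.2 z'.1 z'.2 * u z') (μDT d T D) := by
    intro z hz
    refine Integrable.mono' (hu_int.abs.const_mul M)
      (((hB_sm z.1 z.2).aestronglyMeasurable).mul hu.1) ?_
    filter_upwards [haeS] with z' hz'
    rw [norm_mul, Real.norm_eq_abs, Real.norm_eq_abs]
    exact mul_le_mul_of_nonneg_right (hBbd z hz z' hz') (abs_nonneg _)
  have hsub : nnT d T D σ σ' μ₀ u z₁ - nnT d T D σ σ' μ₀ u z₂ =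
      ∫ z', (nnB d σ σ' μ₀ z₁.1 z₁.2 z'.1 z'.2 - nnB d σ σ' μ₀ z₂.1 z₂.2 z'.1 z'.2) * u z'
        ∂(μDT d T D) := by
    rw [nnT, nnT, ← integral_sub (hint z₁ hz₁) (hint z₂ hz₂)]
    exact integral_congr_ae (Filter.Eventually.of_forall fun z' => by ring)
  rw [hsub, ← Real.norm_eq_abs]
  calc ‖∫ z', (nnB d σ σ' μ₀ z₁.1 z₁.2 z'.1 z'.2 - nnB d σ σ' μ₀ z₂.1 z₂.2 z'.1 z'.2) * u z'
        ∂(μDT d T D)‖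
      ≤ ∫ z', (K₀ * (|z₁.1 - z₂.1| + ‖z₁.2 - z₂.2‖)) * |u z'| ∂(μDT d T D) := by
        refine norm_integral_le_of_norm_le ((hu_int.abs).const_mul _) ?_
        filter_upwards [haeS] with z' hz'
        rw [norm_mul, Real.norm_eq_abs, Real.norm_eq_abs]
        exact mul_le_mul_of_nonneg_right (hBdiff z₁ hz₁ z₂ hz₂ z' hz') (abs_nonneg _)
    _ = (K₀ * (|z₁.1 - z₂.1| + ‖z₁.2 - z₂.2‖)) * ∫ z', |u z'| ∂(μDT d T D) :=
        integral_const_mul _ _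
    _ ≤ (K₀ * (|z₁.1 - z₂.1| + ‖z₁.2 - z₂.2‖)) *
          (((μDT d T D) univ).toReal ^ (1/2 : ℝ) * (eLpNorm u 2 (μDT d T D)).toReal) :=
        mul_le_mul_of_nonneg_left (integral_abs_le_sqrt_mul _ hu) (mul_nonneg hK₀0 hΔ0)
    _ = K₀ * ((μDT d T D) univ).toReal ^ (1/2 : ℝ) * (eLpNorm u 2 (μDT d T D)).toReal *
          (|z₁.1 - z₂.1| + ‖z₁.2 - z₂.2‖) := by ring
end
end

section
/- Let α : [0,∞) → (0,∞) be antitone (non-increasing) with ∫₀^∞ α(s) ds = ∞, let Q : [0,∞) → [0,∞) be continuous, and let J : [0,∞) → [0,∞) be differentiable with J'(τ) = −α(τ) Q(τ) for every τ ≥ 0. Then liminf_{τ→∞} Q(τ) = 0. -/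
open MeasureTheory Set Filter

/-- first step of the cycle-of-stopping-times argument:
if `α : [0,∞) → (0,∞)` is non-increasing with `∫₀^∞ α = ∞`, `Q : [0,∞) → [0,∞)` is
continuous, and `J : [0,∞) → [0,∞)` is differentiable with `J' = −α·Q`, then
`liminf_{τ→∞} Q(τ) = 0`. -/
theorem liminf_Q_eq_zero
    (α Q J : ℝ → ℝ)
    (hα_pos : ∀ τ : ℝ, 0 ≤ τ → 0 < α τ)
    (hα_anti : AntitoneOn α (Ici 0))
    (hα_int : ∫⁻ s in Ioi (0:ℝ), ENNReal.ofReal (α s) = ⊤)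
    (hQ_cont : ContinuousOn Q (Ici 0))
    (hQ_nonneg : ∀ τ : ℝ, 0 ≤ τ → 0 ≤ Q τ)
    (hJ_nonneg : ∀ τ : ℝ, 0 ≤ τ → 0 ≤ J τ)
    (hJ_deriv : ∀ τ : ℝ, 0 ≤ τ → HasDerivAt J (-(α τ * Q τ)) τ) :
    liminf Q atTop = 0 := by
  -- auxiliary globally antitone extension of α
  set α' : ℝ → ℝ := fun s => α (max s 0) with hα'
  have hα'_anti : Antitone α' := fun a b hab =>
    hα_anti (le_max_right a 0) (le_max_right b 0) (max_le_max hab le_rfl)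
  have hα'_meas : Measurable α' := hα'_anti.measurable
  have hα'_eq : ∀ s : ℝ, 0 ≤ s → α' s = α s := fun s hs => by
    simp [hα', max_eq_left hs]
  -- the withDensity measure
  set μ : Measure ℝ := volume.withDensity (fun s => ENNReal.ofReal (α' s)) with hμ
  have hμ_apply : ∀ s : Set ℝ, MeasurableSet s →
      μ s = ∫⁻ x in s, ENNReal.ofReal (α' x) := fun s hs => withDensity_apply _ hs
  -- μ (Ioi 0) = ⊤
  have hμ_Ioi0 : μ (Ioi (0:ℝ)) = ⊤ := by
    rw [hμ_apply _ measurableSet_Ioi]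
    rw [← hα_int]
    apply setLIntegral_congr_fun measurableSet_Ioi
    exact fun x hx => by
      show ENNReal.ofReal (α' x) = ENNReal.ofReal (α x)
      rw [hα'_eq x (le_of_lt hx)]
  -- key: for every ε > 0, Q is frequently ≤ ε
  have hfreq : ∀ ε : ℝ, 0 < ε → ∃ᶠ τ in atTop, Q τ ≤ ε := by
    intro ε hε
    rw [frequently_atTop]
    intro T₀
    by_contra hcon
    push_neg at hcon
    set T : ℝ := max T₀ 0 with hT
    have hT0 : 0 ≤ T := le_max_right _ _
    have hQ_big : ∀ t : ℝ, T ≤ t → ε < Q t := fun t ht =>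
      hcon t (le_trans (le_max_left _ _) ht)
    -- μ (Ioi T) = ⊤
    have hμ_IocT : μ (Ioc (0:ℝ) T) < ⊤ := by
      rw [hμ_apply _ measurableSet_Ioc]
      calc ∫⁻ x in Ioc (0:ℝ) T, ENNReal.ofReal (α' x)
          ≤ ∫⁻ _ in Ioc (0:ℝ) T, ENNReal.ofReal (α' 0) := by
            apply setLIntegral_mono measurable_const
            intro x hx
            exact ENNReal.ofReal_le_ofReal (hα'_anti (le_of_lt hx.1))
        _ = ENNReal.ofReal (α' 0) * volume (Ioc (0:ℝ) T) := by
            rw [setLIntegral_const]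
        _ < ⊤ := by
            apply ENNReal.mul_lt_top ENNReal.ofReal_lt_top
            simp [Real.volume_Ioc, ENNReal.ofReal_lt_top]
    have hμ_IoiT : μ (Ioi T) = ⊤ := by
      by_contra hne
      have hsplit : Ioi (0:ℝ) = Ioc 0 T ∪ Ioi T := (Ioc_union_Ioi_eq_Ioi hT0).symm
      have : μ (Ioi (0:ℝ)) ≤ μ (Ioc 0 T) + μ (Ioi T) := by
        rw [hsplit]; exact measure_union_le _ _
      rw [hμ_Ioi0] at this
      exact absurd (eq_top_iff.2 this)
        (ENNReal.add_ne_top.2 ⟨hμ_IocT.ne, hne⟩)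
    -- On the other hand, μ (Ioc T t) is uniformly bounded
    have hbound : ∀ t : ℝ, T ≤ t → μ (Ioc T t) ≤ ENNReal.ofReal (J T / ε) := by
      intro t ht
      -- interval integrability of α on [T, t]
      have huIcc : uIcc T t ⊆ Ici (0:ℝ) := by
        rw [uIcc_of_le ht]
        exact fun x hx => le_trans hT0 hx.1
      have hα_ii : IntervalIntegrable α volume T t :=
        (hα_anti.mono huIcc).intervalIntegrable
      have hαQ_ii : IntervalIntegrable (fun x => α x * Q x) volume T t :=
        hα_ii.mul_continuousOn (hQ_cont.mono huIcc)
      -- FTC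
      have hftc : ∫ x in T..t, -(α x * Q x) = J t - J T := by
        apply intervalIntegral.integral_eq_sub_of_hasDerivAt
        · intro x hx
          exact hJ_deriv x (huIcc hx)
        · exact hαQ_ii.neg
      have hint_eq : ∫ x in T..t, α x * Q x = J T - J t := by
        have := hftc
        rw [intervalIntegral.integral_neg] at this
        linarith
      -- comparison: ε * ∫ α ≤ ∫ α Q
      have hcomp : ∫ x in T..t, ε * α x ≤ ∫ x in T..t, α x * Q x := by
        apply intervalIntegral.integral_mono_on ht (hα_ii.const_mul ε) hαQ_ii
        intro x hx
        have hx0 : (0:ℝ) ≤ x := le_trans hT0 hx.1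
        have h1 : ε ≤ Q x := le_of_lt (hQ_big x hx.1)
        have h2 : 0 < α x := hα_pos x hx0
        nlinarith
      have hεα : ε * ∫ x in T..t, α x ≤ J T := by
        have hJt : 0 ≤ J t := hJ_nonneg t (le_trans hT0 ht)
        calc ε * ∫ x in T..t, α x = ∫ x in T..t, ε * α x := by
              rw [intervalIntegral.integral_const_mul]
          _ ≤ ∫ x in T..t, α x * Q x := hcomp
          _ = J T - J t := hint_eq
          _ ≤ J T := by linarith
      have hα_le : ∫ x in T..t, α x ≤ J T / ε := by
        rw [le_div_iff₀ hε]; linarith [hεα]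
      -- convert to lintegral
      have hα_int_on : IntegrableOn α (Ioc T t) volume :=
        (intervalIntegrable_iff_integrableOn_Ioc_of_le ht).1 hα_ii
      have hnn : 0 ≤ᵐ[volume.restrict (Ioc T t)] α := by
        apply (ae_restrict_iff' measurableSet_Ioc).2
        exact Filter.Eventually.of_forall fun x hx =>
          le_of_lt (hα_pos x (le_trans hT0 (le_of_lt hx.1)))
      have hlin : ∫⁻ x in Ioc T t, ENNReal.ofReal (α x)
          = ENNReal.ofReal (∫ x in Ioc T t, α x) :=
        (ofReal_integral_eq_lintegral_ofReal hα_int_on hnn).symm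
      rw [hμ_apply _ measurableSet_Ioc]
      have hcongr : ∫⁻ x in Ioc T t, ENNReal.ofReal (α' x)
          = ∫⁻ x in Ioc T t, ENNReal.ofReal (α x) := by
        apply setLIntegral_congr_fun measurableSet_Ioc
        exact fun x hx => by
          show ENNReal.ofReal (α' x) = ENNReal.ofReal (α x)
          rw [hα'_eq x (le_trans hT0 (le_of_lt hx.1))]
      rw [hcongr, hlin]
      apply ENNReal.ofReal_le_ofReal
      rw [← intervalIntegral.integral_of_le ht]
      exact hα_le
    -- derive contradiction: Ioi T = ⋃ n, Ioc T (T + n)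
    have hunion : Ioi T = ⋃ n : ℕ, Ioc T (T + n) := by
      ext x
      simp only [mem_Ioi, mem_iUnion, mem_Ioc]
      constructor
      · intro hx
        obtain ⟨n, hn⟩ := exists_nat_ge (x - T)
        exact ⟨n, hx, by linarith⟩
      · rintro ⟨n, hn, _⟩; exact hn
    have hdir : Directed (· ⊆ ·) (fun n : ℕ => Ioc T (T + n)) := by
      intro m n
      refine ⟨max m n, Ioc_subset_Ioc_right ?_, Ioc_subset_Ioc_right ?_⟩
      · exact add_le_add_right (Nat.cast_le.2 (le_max_left m n)) T
      · exact add_le_add_right (Nat.cast_le.2 (le_max_right m n)) T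
    have : μ (Ioi T) ≤ ENNReal.ofReal (J T / ε) := by
      rw [hunion, hdir.measure_iUnion]
      exact iSup_le fun n => hbound (T + n) (le_add_of_nonneg_right (Nat.cast_nonneg n))
    rw [hμ_IoiT] at this
    exact absurd (eq_top_iff.2 this) ENNReal.ofReal_ne_top
  -- conclude: liminf = 0
  have hbdd : IsBoundedUnder (· ≥ ·) atTop Q :=
    ⟨0, eventually_map.2 (eventually_atTop.2 ⟨0, fun τ hτ => hQ_nonneg τ hτ⟩)⟩
  have hcobdd : IsCoboundedUnder (· ≥ ·) atTop Q :=
    IsCoboundedUnder.of_frequently_le (hfreq 1 one_pos)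
  apply le_antisymm
  · by_contra h
    push_neg at h
    have h2 : liminf Q atTop ≤ liminf Q atTop / 2 :=
      liminf_le_of_frequently_le (hfreq _ (by linarith)) hbdd
    linarith
  · exact le_liminf_of_le hcobdd
      (eventually_atTop.2 ⟨0, fun τ hτ => hQ_nonneg τ hτ⟩)
end

section
/- Let α : [0,∞) → (0,∞) be antitone (non-increasing) with ∫₀^∞ α(s) ds = ∞ and ∫₀^∞ α(s)² ds < ∞, let L > 0, let Q : [0,∞) → [0,∞) satisfy |Q(τ₂) − Q(τ₁)| ≤ L ∫_{τ₁}^{τ₂} α(s) ds for all 0 ≤ τ₁ ≤ τ₂, and let J : [0,∞) → [0,∞) be differentiable with J'(τ) = −α(τ) Q(τ) for every τ ≥ 0. Then lim_{τ→∞} Q(τ) = 0. -/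
open MeasureTheory Set Filter

/-- abstract cycle-of-stopping-times convergence result: if
`α : [0,∞) → (0,∞)` is non-increasing with `∫₀^∞ α = ∞` and `∫₀^∞ α² < ∞`, the
nonnegative quantity `Q` has increments controlled by `L` times the learning-rate mass,
and the nonnegative loss `J` is differentiable with `J' = −α·Q`, then `Q(τ) → 0` as
`τ → ∞`. -/
theorem Q_tendsto_zero
    (L : ℝ) (hL : 0 < L) (α Q J : ℝ → ℝ)
    (hα_pos : ∀ τ : ℝ, 0 ≤ τ → 0 < α τ)
    (hα_anti : AntitoneOn α (Ici 0))
    (hα_int : ∫⁻ s in Ioi (0:ℝ), ENNReal.ofReal (α s) = ⊤)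
    (hα_sq : ∫⁻ s in Ioi (0:ℝ), ENNReal.ofReal (α s ^ 2) < ⊤)
    (hQ_nonneg : ∀ τ : ℝ, 0 ≤ τ → 0 ≤ Q τ)
    (hQ_reg : ∀ τ₁ τ₂ : ℝ, 0 ≤ τ₁ → τ₁ ≤ τ₂ →
      |Q τ₂ - Q τ₁| ≤ L * ∫ s in τ₁..τ₂, α s)
    (hJ_nonneg : ∀ τ : ℝ, 0 ≤ τ → 0 ≤ J τ)
    (hJ_deriv : ∀ τ : ℝ, 0 ≤ τ → HasDerivAt J (-(α τ * Q τ)) τ) :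
    Tendsto Q atTop (nhds 0) := by
  classical
  by_contra hcon
  -- extend α by the constant α 0 to the left of 0
  set β : ℝ → ℝ := fun x => α (max x 0) with hβdef
  have hβ_anti : Antitone β := fun s t hst =>
    hα_anti (le_max_right s 0) (le_max_right t 0) (max_le_max hst le_rfl)
  have hβα : ∀ x : ℝ, 0 ≤ x → β x = α x := fun x hx => by
    simp only [hβdef, max_eq_left hx]
  have hβ_pos : ∀ x : ℝ, 0 < β x := fun x => hα_pos _ (le_max_right x 0)
  have hβ_int : ∀ a b : ℝ, IntervalIntegrable β volume a b := fun a b =>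
    hβ_anti.intervalIntegrable
  set A : ℝ → ℝ := fun x => ∫ s in (0:ℝ)..x, β s with hAdef
  have hA_cont : Continuous A := intervalIntegral.continuous_primitive hβ_int 0
  have hA_diff : ∀ a b : ℝ, A b - A a = ∫ s in a..b, β s := by
    intro a b
    have h := intervalIntegral.integral_add_adjacent_intervals (hβ_int 0 a) (hβ_int a b)
    simp only [hAdef]
    linarith
  have hA_mono : Monotone A := by
    intro a b hab
    have h0 : 0 ≤ ∫ s in a..b, β s :=
      intervalIntegral.integral_nonneg hab fun u _ => (hβ_pos u).le
    have := hA_diff a b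
    linarith
  -- A is unbounded
  have hA_unbdd : ∀ C : ℝ, ∃ x, C ≤ A x := by
    intro C
    by_contra hC
    push_neg at hC
    have hβ_meas : Measurable β := hβ_anti.measurable
    have hf_meas : Measurable fun x => ENNReal.ofReal (β x) := hβ_meas.ennreal_ofReal
    have key : (∫⁻ s in Ioi (0:ℝ), ENNReal.ofReal (α s))
        = ∫⁻ s in Ioi (0:ℝ), ENNReal.ofReal (β s) := by
      refine setLIntegral_congr_fun measurableSet_Ioi (fun x hx => ?_)
      rw [hβα x (le_of_lt hx)]
    set g : ℕ → ℝ → ENNReal := fun n => (Ioc (0:ℝ) (n:ℝ)).indicator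
      (fun x => ENNReal.ofReal (β x)) with hgdef
    have hg_meas : ∀ n, Measurable (g n) := fun n => hf_meas.indicator measurableSet_Ioc
    have hg_mono : Monotone g := fun m n hmn x =>
      Set.indicator_le_indicator_of_subset
        (Ioc_subset_Ioc_right (by exact_mod_cast hmn)) (fun y => zero_le) x
    have hg_sup : ∀ x, (⨆ n, g n x)
        = (Ioi (0:ℝ)).indicator (fun x => ENNReal.ofReal (β x)) x := by
      intro x
      by_cases hx : 0 < x
      · rw [Set.indicator_of_mem (mem_Ioi.mpr hx) (fun x => ENNReal.ofReal (β x))]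
        refine le_antisymm (iSup_le fun n => ?_) ?_
        · exact Set.indicator_apply_le fun _ => le_rfl
        · have hx' : x ∈ Ioc (0:ℝ) ((⌈x⌉₊ : ℕ) : ℝ) := ⟨hx, Nat.le_ceil x⟩
          have hgx : g ⌈x⌉₊ x = ENNReal.ofReal (β x) :=
            Set.indicator_of_mem hx' (fun x => ENNReal.ofReal (β x))
          rw [← hgx]
          exact le_iSup (fun n => g n x) ⌈x⌉₊
      · have hx' : x ∉ Ioi (0:ℝ) := hx
        rw [Set.indicator_of_notMem hx']
        refine le_antisymm (iSup_le fun n => ?_) zero_le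
        rw [hgdef]
        simp only
        rw [Set.indicator_of_notMem (fun h => hx h.1)]
    have hsup : (∫⁻ s in Ioi (0:ℝ), ENNReal.ofReal (β s)) = ⨆ n, ∫⁻ x, g n x := by
      rw [← lintegral_indicator measurableSet_Ioi, ← lintegral_iSup hg_meas hg_mono]
      congr 1
      funext x
      exact (hg_sup x).symm
    have hbound : ∀ n : ℕ, (∫⁻ x, g n x) ≤ ENNReal.ofReal C := by
      intro n
      rw [hgdef]
      simp only
      rw [lintegral_indicator measurableSet_Ioc]
      have hint : IntegrableOn β (Ioc (0:ℝ) (n:ℝ)) := (hβ_int 0 n).1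
      rw [← ofReal_integral_eq_lintegral_ofReal hint (ae_of_all _ fun x => (hβ_pos x).le)]
      apply ENNReal.ofReal_le_ofReal
      have heq : ∫ x in Ioc (0:ℝ) (n:ℝ), β x = A n := by
        rw [hAdef]
        simp only
        rw [intervalIntegral.integral_of_le (by positivity : (0:ℝ) ≤ (n:ℝ))]
      rw [heq]
      exact (hC n).le
    have hle : (∫⁻ s in Ioi (0:ℝ), ENNReal.ofReal (α s)) ≤ ENNReal.ofReal C := by
      rw [key, hsup]
      exact iSup_le hbound
    rw [hα_int] at hle
    exact ENNReal.ofReal_ne_top (top_le_iff.mp hle)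
  -- regularity of Q in terms of A
  have hQreg' : ∀ τ₁ τ₂ : ℝ, 0 ≤ τ₁ → τ₁ ≤ τ₂ → |Q τ₂ - Q τ₁| ≤ L * (A τ₂ - A τ₁) := by
    intro t1 t2 h1 h12
    have hcongr : ∫ s in t1..t2, α s = ∫ s in t1..t2, β s := by
      refine intervalIntegral.integral_congr fun x hx => ?_
      rw [uIcc_of_le h12] at hx
      exact (hβα x (h1.trans hx.1)).symm
    rw [hA_diff t1 t2, ← hcongr]
    exact hQ_reg t1 t2 h1 h12
  have hA_ub : ∀ x y : ℝ, 0 ≤ x → x ≤ y → A y - A x ≤ β 0 * (y - x) := by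
    intro x y hx hxy
    rw [hA_diff]
    calc ∫ s in x..y, β s ≤ ∫ s in x..y, β 0 :=
          intervalIntegral.integral_mono_on hxy (hβ_int x y) intervalIntegrable_const
            (fun s hs => hβ_anti (hx.trans hs.1))
      _ = β 0 * (y - x) := by
          rw [intervalIntegral.integral_const, smul_eq_mul, mul_comm]
  -- continuity of Q on [0,∞)
  have hQ_cont : ContinuousOn Q (Ici 0) := by
    have hd0 : ∀ x ∈ Ici (0:ℝ), ∀ y ∈ Ici (0:ℝ), x ≤ y →
        dist (Q x) (Q y) ≤ (L * β 0) * dist x y := by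
      intro x hx y _ hxy
      rw [Real.dist_eq, Real.dist_eq, abs_sub_comm (Q x) (Q y),
        abs_sub_comm x y, abs_of_nonneg (by linarith : (0:ℝ) ≤ y - x)]
      calc |Q y - Q x| ≤ L * (A y - A x) := hQreg' x y hx hxy
        _ ≤ L * (β 0 * (y - x)) := by nlinarith [hA_ub x y hx hxy]
        _ = (L * β 0) * (y - x) := by ring
    have hd : ∀ x ∈ Ici (0:ℝ), ∀ y ∈ Ici (0:ℝ),
        dist (Q x) (Q y) ≤ (L * β 0) * dist x y := by
      intro x hx y hy
      rcases le_total x y with h | h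
      · exact hd0 x hx y hy h
      · rw [dist_comm (Q x) (Q y), dist_comm x y]
        exact hd0 y hy x hx h
    exact (LipschitzOnWith.of_dist_le' hd).continuousOn
  -- integrability of α·Q
  have hP_int : ∀ a b : ℝ, 0 ≤ a → a ≤ b →
      IntervalIntegrable (fun t => α t * Q t) volume a b := by
    intro a b ha hab
    have hsub : uIcc a b ⊆ Ici 0 := by
      rw [uIcc_of_le hab]
      exact fun x hx => ha.trans hx.1
    have hαi : IntervalIntegrable α volume a b := (hα_anti.mono hsub).intervalIntegrable
    exact hαi.mul_continuousOn (hQ_cont.mono hsub)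
  -- FTC
  have hJ_eq : ∀ a b : ℝ, 0 ≤ a → a ≤ b → ∫ t in a..b, α t * Q t = J a - J b := by
    intro a b ha hab
    have hsub : uIcc a b ⊆ Ici 0 := by
      rw [uIcc_of_le hab]
      exact fun x hx => ha.trans hx.1
    have h1 : ∫ t in a..b, -(α t * Q t) = J b - J a :=
      intervalIntegral.integral_eq_sub_of_hasDerivAt
        (fun t ht => hJ_deriv t (hsub ht)) (hP_int a b ha hab).neg
    rw [intervalIntegral.integral_neg] at h1
    linarith
  have hJ_bound : ∀ b : ℝ, 0 ≤ b → ∫ t in (0:ℝ)..b, α t * Q t ≤ J 0 := by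
    intro b hb
    rw [hJ_eq 0 b le_rfl hb]
    linarith [hJ_nonneg b hb]
  -- negation of convergence
  obtain ⟨ε, hε, hfreq⟩ : ∃ ε > 0, ∀ N : ℝ, ∃ τ, N ≤ τ ∧ 0 ≤ τ ∧ ε ≤ Q τ := by
    rw [Metric.tendsto_atTop] at hcon
    push_neg at hcon
    obtain ⟨ε, hε, h⟩ := hcon
    refine ⟨ε, hε, fun N => ?_⟩
    obtain ⟨τ, hτN, hτd⟩ := h (max N 0)
    have hτ0 : (0:ℝ) ≤ τ := (le_max_right N 0).trans hτN
    refine ⟨τ, (le_max_left N 0).trans hτN, hτ0, ?_⟩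
    rwa [Real.dist_eq, sub_zero, abs_of_nonneg (hQ_nonneg τ hτ0)] at hτd
  set c : ℝ := ε ^ 2 / (4 * L) with hcdef
  have hc : 0 < c := by positivity
  -- key step
  have hstep : ∀ T : ℝ, 0 ≤ T → ∃ T', T ≤ T' ∧ 0 ≤ T' ∧ c ≤ ∫ t in T..T', α t * Q t := by
    intro T hT
    obtain ⟨τ, hτT, hτ0, hQτ⟩ := hfreq T
    have hpos : 0 < ε / (2 * L) := by positivity
    obtain ⟨x, hx⟩ := hA_unbdd (A τ + ε / (2 * L))
    have hτx : τ ≤ x := by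
      by_contra h
      push_neg at h
      have := hA_mono h.le
      linarith
    obtain ⟨σ, hσmem, hσval⟩ :=
      intermediate_value_Icc hτx hA_cont.continuousOn
        (⟨le_add_of_nonneg_right hpos.le, hx⟩ : A τ + ε / (2 * L) ∈ Icc (A τ) (A x))
    have hτσ : τ ≤ σ := hσmem.1
    have hσ0 : 0 ≤ σ := hτ0.trans hτσ
    have hLε : L * (ε / (2 * L)) = ε / 2 := by
      field_simp
    -- lower bound on Q on [τ, σ]
    have hQlb : ∀ s ∈ Icc τ σ, ε / 2 ≤ Q s := by
      intro s hs
      have h1 := hQreg' τ s hτ0 hs.1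
      have h2 : A s - A τ ≤ ε / (2 * L) := by
        have := hA_mono hs.2
        rw [hσval] at this
        linarith
      have h3 : Q τ - Q s ≤ |Q s - Q τ| := by
        rw [abs_sub_comm]
        exact le_abs_self _
      have h4 : L * (A s - A τ) ≤ ε / 2 := by nlinarith
      linarith
    have hsubσ : uIcc τ σ ⊆ Ici 0 := by
      rw [uIcc_of_le hτσ]
      exact fun z hz => hτ0.trans hz.1
    have hαi : IntervalIntegrable α volume τ σ := (hα_anti.mono hsubσ).intervalIntegrable
    have hαint_eq : ∫ t in τ..σ, α t = ε / (2 * L) := by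
      have hcongr : ∫ t in τ..σ, α t = ∫ t in τ..σ, β t :=
        intervalIntegral.integral_congr fun z hz => (hβα z (hsubσ hz)).symm
      rw [hcongr, ← hA_diff, hσval]
      ring
    have hlow : ε / 2 * (ε / (2 * L)) ≤ ∫ t in τ..σ, α t * Q t := by
      have hmono : ∫ t in τ..σ, α t * (ε / 2) ≤ ∫ t in τ..σ, α t * Q t :=
        intervalIntegral.integral_mono_on hτσ (hαi.mul_const _) (hP_int τ σ hτ0 hτσ)
          (fun s hs => mul_le_mul_of_nonneg_left (hQlb s hs) (hα_pos s (hτ0.trans hs.1)).le)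
      calc ε / 2 * (ε / (2 * L)) = (∫ t in τ..σ, α t) * (ε / 2) := by
            rw [hαint_eq]; ring
        _ = ∫ t in τ..σ, α t * (ε / 2) := (intervalIntegral.integral_mul_const _ _).symm
        _ ≤ ∫ t in τ..σ, α t * Q t := hmono
    refine ⟨σ, hτT.trans hτσ, hσ0, ?_⟩
    have hadd := intervalIntegral.integral_add_adjacent_intervals
      (hP_int T τ hT hτT) (hP_int τ σ hτ0 hτσ)
    have hnn : 0 ≤ ∫ t in T..τ, α t * Q t :=
      intervalIntegral.integral_nonneg hτT fun u hu =>
        mul_nonneg (hα_pos u (hT.trans hu.1)).le (hQ_nonneg u (hT.trans hu.1))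
    have hceq : c = ε / 2 * (ε / (2 * L)) := by
      rw [hcdef]
      field_simp
      ring
    linarith
  -- iterate
  have hn : ∀ n : ℕ, ∃ T, 0 ≤ T ∧ (n : ℝ) * c ≤ ∫ t in (0:ℝ)..T, α t * Q t := by
    intro n
    induction n with
    | zero => exact ⟨0, le_rfl, by simp⟩
    | succ n ih =>
      obtain ⟨T, hT0, hTle⟩ := ih
      obtain ⟨T', hTT', hT'0, hstp⟩ := hstep T hT0
      refine ⟨T', hT'0, ?_⟩
      have hadd := intervalIntegral.integral_add_adjacent_intervals
        (hP_int 0 T le_rfl hT0) (hP_int T T' hT0 hTT')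
      push_cast
      linarith
  obtain ⟨n, hnc⟩ := exists_nat_gt (J 0 / c)
  obtain ⟨T, hT0, hTle⟩ := hn n
  have hub := hJ_bound T hT0
  have hJlt : J 0 < (n : ℝ) * c := (div_lt_iff₀ hc).mp hnc
  linarith
end

section
/- Let n ≥ 1, let J : ℝⁿ → [0,∞) be differentiable with gradient ∇J that is L_J-Lipschitz and satisfies ‖∇J(θ)‖ ≤ C for all θ ∈ ℝⁿ, let α : [0,∞) → (0,∞) be antitone (non-increasing) with ∫₀^∞ α(s) ds = ∞, and let θ : [0,∞) → ℝⁿ be differentiable with θ'(τ) = −α(τ) ∇J(θ(τ)) for all τ ≥ 0. Then ‖∇J(θ(τ))‖ → 0 as τ → ∞, i.e. continuous-time gradient descent converges to a stationary point. -/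
open MeasureTheory Set Filter

theorem myIntervalIntegrable_smul_continuousOn
    {E : Type*} [NormedAddCommGroup E] [NormedSpace ℝ E] [SecondCountableTopology E]
    {f : ℝ → ℝ} {g : ℝ → E} {a b : ℝ} (hf : IntervalIntegrable f volume a b)
    (hg : ContinuousOn g (uIcc a b)) : IntervalIntegrable (fun x => f x • g x) volume a b := by
  rw [intervalIntegrable_iff] at hf ⊢
  have he : Set.uIoc a b = Ioc (min a b) (max a b) := rfl
  have he2 : Set.uIcc a b = Icc (min a b) (max a b) := rfl
  rw [he] at hf ⊢
  rw [he2] at hg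
  have h1 : IntegrableOn f (Icc (min a b) (max a b)) volume :=
    Iff.mpr integrableOn_Icc_iff_integrableOn_Ioc hf
  exact (h1.smul_continuousOn hg isCompact_Icc).mono_set Ioc_subset_Icc_self

/-- convergence of continuous-time gradient descent to a stationary
point in finite dimensions: if `J : ℝⁿ → [0,∞)` has an `L_J`-Lipschitz gradient `G`
bounded by `C`, the learning rate `α` is positive, non-increasing and of infinite total
mass, and `θ' = −α·G(θ)`, then `‖G(θ(τ))‖ → 0` as `τ → ∞`. -/
theorem gradient_descent_stationary_convergence
    (n : ℕ) (hn : 1 ≤ n)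
    (J : EuclideanSpace ℝ (Fin n) → ℝ)
    (hJ_nonneg : ∀ x, 0 ≤ J x)
    (G : EuclideanSpace ℝ (Fin n) → EuclideanSpace ℝ (Fin n))
    (L_J C : ℝ)
    (hgrad : ∀ x, HasGradientAt J (G x) x)
    (hlip : LipschitzWith (Real.toNNReal L_J) G)
    (hbdd : ∀ x, ‖G x‖ ≤ C)
    (α : ℝ → ℝ)
    (hα_pos : ∀ τ : ℝ, 0 ≤ τ → 0 < α τ)
    (hα_anti : AntitoneOn α (Ici 0))
    (hα_int : ∫⁻ s in Ioi (0:ℝ), ENNReal.ofReal (α s) = ⊤)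
    (θ : ℝ → EuclideanSpace ℝ (Fin n))
    (hθ : ∀ τ : ℝ, 0 ≤ τ → HasDerivAt θ (-(α τ • G (θ τ))) τ) :
    Tendsto (fun τ => ‖G (θ τ)‖) atTop (nhds 0) := by
  set g : ℝ → ℝ := fun τ => ‖G (θ τ)‖ with hg_def
  set M : ℝ := (Real.toNNReal L_J : ℝ) with hM_def
  have hM0 : 0 ≤ M := (Real.toNNReal L_J).coe_nonneg
  have hC0 : 0 ≤ C := le_trans (norm_nonneg _) (hbdd 0)
  -- continuity facts
  have hθc : ContinuousOn θ (Ici 0) := fun x hx => ((hθ x hx).continuousAt).continuousWithinAt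
  have hgc : ContinuousOn g (Ici 0) :=
    (continuous_norm.comp (hlip.continuous.comp continuous_id)).comp_continuousOn hθc
  -- integrability of α on subintervals of [0,∞)
  have hαint : ∀ a b : ℝ, 0 ≤ a → a ≤ b → IntervalIntegrable α volume a b := by
    intro a b ha hab
    exact AntitoneOn.intervalIntegrable (hα_anti.mono (by
      rw [uIcc_of_le hab]; exact fun x hx => le_trans ha hx.1))
  have hαnn : ∀ s : ℝ, 0 ≤ s → 0 ≤ α s := fun s hs => (hα_pos s hs).le
  -- integrability of the key integrands
  have hαg2int : ∀ a b : ℝ, 0 ≤ a → a ≤ b →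
      IntervalIntegrable (fun s => α s * g s ^ 2) volume a b := by
    intro a b ha hab
    refine (hαint a b ha hab).mul_continuousOn ?_
    rw [uIcc_of_le hab]
    exact ((hgc.mono (fun x hx => le_trans ha hx.1)).pow 2)
  have hθ'int : ∀ a b : ℝ, 0 ≤ a → a ≤ b →
      IntervalIntegrable (fun s => -(α s • G (θ s))) volume a b := by
    intro a b ha hab
    refine (myIntervalIntegrable_smul_continuousOn (hαint a b ha hab) ?_).neg
    rw [uIcc_of_le hab]
    exact (hlip.continuous.comp_continuousOn (hθc.mono (fun x hx => le_trans ha hx.1)))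
  -- chain rule for J ∘ θ
  have hJd : ∀ τ : ℝ, 0 ≤ τ → HasDerivAt (fun t => J (θ t)) (-(α τ * g τ ^ 2)) τ := by
    intro τ hτ
    have h1 := (hgrad (θ τ)).hasFDerivAt.comp_hasDerivAt τ (hθ τ hτ)
    refine h1.congr_deriv ?_
    rw [InnerProductSpace.toDual_apply_apply, inner_neg_right, real_inner_smul_right,
      real_inner_self_eq_norm_sq]
  -- FTC for J ∘ θ
  have hFTC : ∀ a b : ℝ, 0 ≤ a → a ≤ b →
      (∫ s in a..b, α s * g s ^ 2) = J (θ a) - J (θ b) := by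
    intro a b ha hab
    have hint : IntervalIntegrable (fun s => -(α s * g s ^ 2)) volume a b := by
      exact (hαg2int a b ha hab).neg
    have key : (∫ s in a..b, -(α s * g s ^ 2)) = J (θ b) - J (θ a) := by
      refine intervalIntegral.integral_eq_sub_of_hasDerivAt (f := fun t => J (θ t)) ?_ hint
      intro x hx
      rw [uIcc_of_le hab] at hx
      exact hJd x (le_trans ha hx.1)
    rw [intervalIntegral.integral_neg] at key
    linarith
  -- total mass bound
  have hJbound : ∀ b : ℝ, 0 ≤ b → (∫ s in (0:ℝ)..b, α s * g s ^ 2) ≤ J (θ 0) := by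
    intro b hb
    rw [hFTC 0 b le_rfl hb]
    linarith [hJ_nonneg (θ b)]
  have hαg2nonneg : ∀ a b : ℝ, 0 ≤ a → a ≤ b →
      0 ≤ ∫ s in a..b, α s * g s ^ 2 := by
    intro a b ha hab
    apply intervalIntegral.integral_nonneg hab
    intro u hu
    exact mul_nonneg (hαnn u (le_trans ha hu.1)) (sq_nonneg _)
  -- displacement bound
  have hdisp : ∀ a b : ℝ, 0 ≤ a → a ≤ b → ‖θ b - θ a‖ ≤ C * ∫ s in a..b, α s := by
    intro a b ha hab
    have key : (∫ s in a..b, -(α s • G (θ s))) = θ b - θ a := by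
      refine intervalIntegral.integral_eq_sub_of_hasDerivAt ?_ (hθ'int a b ha hab)
      intro x hx
      rw [uIcc_of_le hab] at hx
      exact hθ x (le_trans ha hx.1)
    rw [← key]
    calc ‖∫ s in a..b, -(α s • G (θ s))‖ ≤ ∫ s in a..b, ‖-(α s • G (θ s))‖ :=
          intervalIntegral.norm_integral_le_integral_norm hab
      _ ≤ ∫ s in a..b, α s * C := by
          apply intervalIntegral.integral_mono_on hab (hθ'int a b ha hab).norm
            ((hαint a b ha hab).mul_const C)
          intro u hu
          have hu0 : 0 ≤ u := le_trans ha hu.1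
          rw [norm_neg, norm_smul, Real.norm_eq_abs, abs_of_nonneg (hαnn u hu0)]
          exact mul_le_mul_of_nonneg_left (hbdd (θ u)) (hαnn u hu0)
      _ = C * ∫ s in a..b, α s := by
          rw [intervalIntegral.integral_mul_const, mul_comm]
  -- gradient-norm lower bound along the flow
  have hglow : ∀ a b : ℝ, 0 ≤ a → a ≤ b → g a - M * (C * ∫ s in a..b, α s) ≤ g b := by
    intro a b ha hab
    have h1 : |g a - g b| ≤ ‖G (θ a) - G (θ b)‖ := abs_norm_sub_norm_le _ _
    have h2 : ‖G (θ a) - G (θ b)‖ ≤ M * ‖θ a - θ b‖ := by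
      have := hlip.dist_le_mul (θ a) (θ b)
      simpa [dist_eq_norm, hM_def] using this
    have h3 : ‖θ a - θ b‖ ≤ C * ∫ s in a..b, α s := by
      rw [norm_sub_rev]; exact hdisp a b ha hab
    have h4 : g a - g b ≤ |g a - g b| := le_abs_self _
    nlinarith [mul_le_mul_of_nonneg_left h3 hM0]
  -- the primitive A of α
  set A : ℝ → ℝ := fun T => ∫ s in (0:ℝ)..T, α s with hA_def
  have hAadd : ∀ a b : ℝ, 0 ≤ a → a ≤ b → A b = A a + ∫ s in a..b, α s := by
    intro a b ha hab
    exact (intervalIntegral.integral_add_adjacent_intervals (hαint 0 a le_rfl ha)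
      (hαint a b ha hab)).symm
  have hAmono : ∀ a b : ℝ, 0 ≤ a → a ≤ b → A a ≤ A b := by
    intro a b ha hab
    rw [hAadd a b ha hab]
    have : 0 ≤ ∫ s in a..b, α s := by
      apply intervalIntegral.integral_nonneg hab
      intro u hu; exact hαnn u (le_trans ha hu.1)
    linarith
  have hAunbdd : ∀ B : ℝ, ∃ T : ℝ, 0 ≤ T ∧ B < A T := by
    by_contra hcon
    push_neg at hcon
    obtain ⟨B, hB⟩ := hcon
    have hBbound : ∀ T : ℝ, 0 ≤ T → A T ≤ B := fun T hT => hB T hT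
    have hB0 : 0 ≤ B := le_trans (le_of_eq (by simp [hA_def])) (hBbound 0 le_rfl)
    have hcover : Ioi (0:ℝ) = ⋃ k : ℕ, Ioc (k : ℝ) (k + 1) := by
      ext x
      simp only [mem_Ioi, mem_iUnion, mem_Ioc]
      constructor
      · intro hx
        have hceil : 1 ≤ ⌈x⌉₊ := Nat.one_le_ceil_iff.mpr hx
        refine ⟨⌈x⌉₊ - 1, ?_, ?_⟩
        · have h1 : ⌈x⌉₊ - 1 < ⌈x⌉₊ := Nat.sub_lt (by omega) one_pos
          exact Nat.lt_ceil.mp h1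
        · have h2 : (⌈x⌉₊ - 1 : ℕ) + 1 = ⌈x⌉₊ := by omega
          calc x ≤ (⌈x⌉₊ : ℝ) := Nat.le_ceil x
            _ = ((⌈x⌉₊ - 1 : ℕ) : ℝ) + 1 := by
                have := congrArg (fun m : ℕ => (m : ℝ)) h2
                push_cast at this
                linarith
      · rintro ⟨k, hk1, hk2⟩
        exact lt_of_le_of_lt (Nat.cast_nonneg k) hk1
    have hdisj : Pairwise (Function.onFun Disjoint fun k : ℕ => Ioc (k : ℝ) (k + 1)) := by
      intro i j hij
      simp only [Function.onFun]
      rw [Set.Ioc_disjoint_Ioc]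
      rcases hij.lt_or_gt with h | h
      · have h1 : (i:ℝ) + 1 ≤ j := by exact_mod_cast h
        exact le_trans (min_le_left _ _) (le_trans h1 (le_max_right _ _))
      · have h1 : (j:ℝ) + 1 ≤ i := by exact_mod_cast h
        exact le_trans (min_le_right _ _) (le_trans h1 (le_max_left _ _))
    have hsplit := lintegral_iUnion (μ := volume) (fun k : ℕ => measurableSet_Ioc) hdisj
      (fun s => ENNReal.ofReal (α s))
    rw [hcover, hsplit] at hα_int
    have hterm : ∀ k : ℕ, (∫⁻ s in Ioc (k : ℝ) (k + 1), ENNReal.ofReal (α s)) =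
        ENNReal.ofReal (A (k + 1) - A k) := by
      intro k
      have hk0 : (0:ℝ) ≤ (k : ℝ) := Nat.cast_nonneg k
      have hint : IntegrableOn α (Ioc (k : ℝ) (k + 1)) volume := by
        have := (hαint k (k + 1) hk0 (by linarith)).1
        simpa using this
      have hnn : 0 ≤ᵐ[volume.restrict (Ioc (k : ℝ) (k + 1))] α := by
        refine (ae_restrict_iff' measurableSet_Ioc).mpr (ae_of_all _ ?_)
        intro x hx
        exact hαnn x (le_trans hk0 hx.1.le)
      rw [← ofReal_integral_eq_lintegral_ofReal hint hnn]
      congr 1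
      have := hAadd (k : ℝ) (k + 1) hk0 (by linarith)
      rw [intervalIntegral.integral_of_le (by linarith : (k:ℝ) ≤ k + 1)] at this
      linarith
    have hbound : (∑' k : ℕ, ∫⁻ s in Ioc (k : ℝ) (k + 1), ENNReal.ofReal (α s)) ≤
        ENNReal.ofReal B := by
      rw [ENNReal.tsum_eq_iSup_nat]
      apply iSup_le
      intro K
      have hsum : (∑ k ∈ Finset.range K, ∫⁻ s in Ioc (k : ℝ) (k + 1), ENNReal.ofReal (α s)) =
          ENNReal.ofReal (A K) := by
        induction K with
        | zero => simp [hA_def]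
        | succ K ih =>
          rw [Finset.sum_range_succ, ih, hterm K]
          rw [← ENNReal.ofReal_add (by
            have := hAmono 0 K (le_rfl) (Nat.cast_nonneg K)
            simp only [hA_def] at this ⊢
            simpa [intervalIntegral.integral_same] using this) (by
            have := hAmono (K : ℝ) (K + 1) (Nat.cast_nonneg K) (by linarith)
            linarith)]
          push_cast
          ring_nf
      rw [hsum]
      exact ENNReal.ofReal_le_ofReal (hBbound K (Nat.cast_nonneg K))
    rw [hα_int] at hbound
    exact absurd hbound (by simp [ENNReal.ofReal_lt_top.ne])
  have hAcont : ContinuousOn A (Ici 0) := by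
    have hkey : ∀ x y : ℝ, 0 ≤ x → x ≤ y → A y - A x ≤ α 0 * (y - x) := by
      intro x y hx hxy
      have h1 : A y - A x = ∫ s in x..y, α s := by
        have := hAadd x y hx hxy; linarith
      rw [h1]
      calc (∫ s in x..y, α s) ≤ ∫ s in x..y, α 0 := by
            apply intervalIntegral.integral_mono_on hxy (hαint x y hx hxy)
              intervalIntegrable_const
            intro u hu
            exact hα_anti (Set.mem_Ici.mpr le_rfl) (Set.mem_Ici.mpr (le_trans hx hu.1)) (le_trans hx hu.1)
        _ = α 0 * (y - x) := by rw [intervalIntegral.integral_const, smul_eq_mul, mul_comm]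
    have hlips : LipschitzOnWith (Real.toNNReal (α 0)) A (Ici 0) := by
      apply LipschitzOnWith.of_dist_le_mul
      intro x hx y hy
      rw [Real.coe_toNNReal _ (hαnn 0 le_rfl), Real.dist_eq, Real.dist_eq]
      rcases le_total x y with h | h
      · have h1 := hkey x y hx h
        have h2 : A x ≤ A y := hAmono x y hx h
        rw [abs_of_nonpos (by linarith), abs_of_nonpos (by linarith)]
        linarith
      · have h1 := hkey y x hy h
        have h2 : A y ≤ A x := hAmono y x hy h
        rw [abs_of_nonneg (by linarith), abs_of_nonneg (by linarith)]
        linarith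
    exact hlips.continuousOn
  -- choosing the stopping time
  have hstop : ∀ τ δ : ℝ, 0 ≤ τ → 0 < δ → ∃ σ : ℝ, τ ≤ σ ∧ (∫ s in τ..σ, α s) = δ := by
    intro τ δ hτ hδ
    obtain ⟨T, hT0, hTB⟩ := hAunbdd (A τ + δ)
    have hτT : τ ≤ T := by
      by_contra h
      push_neg at h
      have := hAmono T τ hT0 h.le
      linarith
    have hmem : A τ + δ ∈ Icc (A τ) (A T) := ⟨by linarith, hTB.le⟩
    have hsub : Icc τ T ⊆ Ici 0 := fun x hx => le_trans hτ hx.1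
    obtain ⟨σ, hσmem, hσval⟩ := intermediate_value_Icc hτT (hAcont.mono hsub) hmem
    refine ⟨σ, hσmem.1, ?_⟩
    have := hAadd τ σ hτ hσmem.1
    rw [hσval] at this
    linarith
  -- main contradiction argument
  by_contra hcon
  rw [Metric.tendsto_atTop] at hcon
  push_neg at hcon
  obtain ⟨ε, hε, hfreq⟩ := hcon
  set δ0 : ℝ := ε / (2 * M * C + 1) with hδ0_def
  have hden : 0 < 2 * M * C + 1 := by positivity
  have hδ0 : 0 < δ0 := div_pos hε hden
  have hMCδ : M * C * δ0 ≤ ε / 2 := by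
    have h : M * C * δ0 = (M * C * ε) / (2 * M * C + 1) := by rw [hδ0_def]; ring
    rw [h, div_le_div_iff₀ hden two_pos]
    nlinarith
  set c : ℝ := (ε / 2) ^ 2 * δ0 with hc_def
  have hc : 0 < c := by positivity
  -- one episode
  have hepisode : ∀ T : ℝ, 0 ≤ T → ∃ S : ℝ, T ≤ S ∧
      c ≤ ∫ s in T..S, α s * g s ^ 2 := by
    intro T hT
    obtain ⟨τ, hτT, hτε⟩ := hfreq T
    have hτ0 : 0 ≤ τ := le_trans hT hτT
    have hgτ : ε ≤ g τ := by
      rwa [Real.dist_eq, sub_zero, abs_of_nonneg (norm_nonneg _)] at hτε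
    obtain ⟨σ, hτσ, hσint⟩ := hstop τ δ0 hτ0 hδ0
    have hglower : ∀ s ∈ Icc τ σ, ε / 2 ≤ g s := by
      intro s hs
      have hs0 : 0 ≤ s := le_trans hτ0 hs.1
      have hint_le : (∫ u in τ..s, α u) ≤ δ0 := by
        have h1 := hAadd τ s hτ0 hs.1
        have h2 := hAadd τ σ hτ0 hτσ
        have h3 := hAmono s σ hs0 hs.2
        rw [hσint] at h2
        linarith
      have hint_nn : 0 ≤ ∫ u in τ..s, α u := by
        apply intervalIntegral.integral_nonneg hs.1
        intro u hu; exact hαnn u (le_trans hτ0 hu.1)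
      have h4 := hglow τ s hτ0 hs.1
      have h5 : M * (C * ∫ u in τ..s, α u) ≤ M * C * δ0 := by
        rw [← mul_assoc]
        exact mul_le_mul_of_nonneg_left hint_le (by positivity)
      linarith
    refine ⟨σ, le_trans hτT hτσ, ?_⟩
    have hlow2 : c ≤ ∫ s in τ..σ, α s * g s ^ 2 := by
      have h1 : (∫ s in τ..σ, α s * (ε / 2) ^ 2) ≤ ∫ s in τ..σ, α s * g s ^ 2 := by
        apply intervalIntegral.integral_mono_on hτσ ((hαint τ σ hτ0 hτσ).mul_const _)
          (hαg2int τ σ hτ0 hτσ)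
        intro u hu
        have hu0 : 0 ≤ u := le_trans hτ0 hu.1
        apply mul_le_mul_of_nonneg_left _ (hαnn u hu0)
        have := hglower u hu
        nlinarith
      have h2 : (∫ s in τ..σ, α s * (ε / 2) ^ 2) = c := by
        rw [intervalIntegral.integral_mul_const, hσint, hc_def]
        ring
      linarith
    have hsplit : (∫ s in T..σ, α s * g s ^ 2) =
        (∫ s in T..τ, α s * g s ^ 2) + ∫ s in τ..σ, α s * g s ^ 2 := by
      rw [← intervalIntegral.integral_add_adjacent_intervals (hαg2int T τ hT hτT)
        (hαg2int τ σ hτ0 hτσ)]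
    rw [hsplit]
    have := hαg2nonneg T τ hT hτT
    linarith
  -- induction
  have hind : ∀ k : ℕ, ∃ T : ℝ, 0 ≤ T ∧ (k : ℝ) * c ≤ ∫ s in (0:ℝ)..T, α s * g s ^ 2 := by
    intro k
    induction k with
    | zero => exact ⟨0, le_rfl, by simp⟩
    | succ k ih =>
      obtain ⟨T, hT0, hTk⟩ := ih
      obtain ⟨S, hTS, hSc⟩ := hepisode T hT0
      refine ⟨S, le_trans hT0 hTS, ?_⟩
      have hsplit : (∫ s in (0:ℝ)..S, α s * g s ^ 2) =
          (∫ s in (0:ℝ)..T, α s * g s ^ 2) + ∫ s in T..S, α s * g s ^ 2 := by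
        rw [← intervalIntegral.integral_add_adjacent_intervals (hαg2int 0 T le_rfl hT0)
          (hαg2int T S hT0 hTS)]
      rw [hsplit]
      push_cast
      linarith
  obtain ⟨k, hk⟩ := exists_nat_gt (J (θ 0) / c)
  obtain ⟨T, hT0, hTk⟩ := hind k
  have := hJbound T hT0
  have hkc : J (θ 0) < k * c := by
    rw [div_lt_iff₀ hc] at hk
    linarith
  linarith
end
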